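/- arXiv:2103.09215 — 5 statements merged into one kernel-verified Lean document; each statement's English description precedes it below -/
import Mathlib

section
/- Let T be a compact operator on a separable Hilbert space and let (Pₙ) be a sequence of mutually orthogonal orthogonal projections. Then the series ∑ₙ Pₙ T Pₙ converges in the strong operator topology and the limit is a compact operator. -/
open Filter Topology

/-- `P` is an orthogonal projection: idempotent and self-adjoint. -/
def IsOrthoProj {H : Type*} [NormedAddCommGroup H] [InnerProductSpace ℂ H] [CompleteSpace H]
    (P : H →L[ℂ] H) : Prop :=
  P ∘L P = P ∧ IsSelfAdjoint P

section Aux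

variable {H : Type*} [NormedAddCommGroup H] [InnerProductSpace ℂ H] [CompleteSpace H]

local notation "⟪" x ", " y "⟫" => @inner ℂ _ _ x y

lemma IsOrthoProj.symm' {P : H →L[ℂ] H} (hP : IsOrthoProj P) (x y : H) :
    ⟪P x, y⟫ = ⟪x, P y⟫ :=
  hP.2.isSymmetric x y

lemma IsOrthoProj.idem {P : H →L[ℂ] H} (hP : IsOrthoProj P) (x : H) :
    P (P x) = P x := by
  simpa using ContinuousLinearMap.ext_iff.mp hP.1 x

lemma IsOrthoProj.norm_apply_le {P : H →L[ℂ] H} (hP : IsOrthoProj P) (x : H) :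
    ‖P x‖ ≤ ‖x‖ := by
  rcases eq_or_ne (P x) 0 with h | h
  · simp [h]
  · have h1 : ‖P x‖ ^ 2 = RCLike.re ⟪x, P x⟫ := by
      rw [← inner_self_eq_norm_sq (𝕜 := ℂ) (P x), hP.symm', hP.idem]
    have h2 : RCLike.re ⟪x, P x⟫ ≤ ‖x‖ * ‖P x‖ := re_inner_le_norm (𝕜 := ℂ) x (P x)
    have h3 : 0 < ‖P x‖ := norm_pos_iff.mpr h
    nlinarith

lemma ortho_aux {P : ℕ → H →L[ℂ] H} (hP : ∀ n, IsOrthoProj (P n))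
    (hPo : ∀ m n, m ≠ n → P m ∘L P n = 0) {m n : ℕ} (h : m ≠ n) (u v : H) :
    ⟪P m u, P n v⟫ = 0 := by
  rw [(hP m).symm']
  have h0 : P m (P n v) = 0 := by
    simpa using ContinuousLinearMap.ext_iff.mp (hPo m n h) v
  rw [h0, inner_zero_right]

lemma pyth_aux (s : Finset ℕ) (f : ℕ → H)
    (h : ∀ i ∈ s, ∀ j ∈ s, i ≠ j → ⟪f i, f j⟫ = 0) :
    ‖∑ i ∈ s, f i‖ ^ 2 = ∑ i ∈ s, ‖f i‖ ^ 2 := by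
  rw [← inner_self_eq_norm_sq (𝕜 := ℂ), sum_inner, map_sum]
  refine Finset.sum_congr rfl fun i hi => ?_
  rw [inner_sum, Finset.sum_eq_single i (fun j hj hji => h i hi j hj (Ne.symm hji))
    (fun hi' => absurd hi hi'), inner_self_eq_norm_sq (𝕜 := ℂ)]

lemma bessel_aux {P : ℕ → H →L[ℂ] H} (hP : ∀ n, IsOrthoProj (P n))
    (hPo : ∀ m n, m ≠ n → P m ∘L P n = 0) (s : Finset ℕ) (x : H) :
    ∑ n ∈ s, ‖P n x‖ ^ 2 ≤ ‖x‖ ^ 2 := by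
  set y := ∑ n ∈ s, P n x with hy
  have hpy : ‖y‖ ^ 2 = ∑ n ∈ s, ‖P n x‖ ^ 2 :=
    pyth_aux s _ (fun i _ j _ hij => ortho_aux hP hPo hij x x)
  have hxy : RCLike.re ⟪x, y⟫ = ∑ n ∈ s, ‖P n x‖ ^ 2 := by
    rw [hy, inner_sum, map_sum]
    refine Finset.sum_congr rfl fun n _ => ?_
    have h1 : ⟪x, P n x⟫ = ⟪P n x, P n x⟫ := by
      conv_lhs => rw [show P n x = P n (P n x) from ((hP n).idem x).symm]
      rw [← (hP n).symm']
    rw [h1, inner_self_eq_norm_sq (𝕜 := ℂ)]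
  have h2 : RCLike.re ⟪x, y⟫ ≤ ‖x‖ * ‖y‖ := re_inner_le_norm (𝕜 := ℂ) x y
  nlinarith [sq_nonneg (‖x‖ - ‖y‖), norm_nonneg x, norm_nonneg y]

end Aux

/-- If `T` is a compact operator on a separable Hilbert space and `(Pₙ)` is a sequence of
mutually orthogonal orthogonal projections, then the series `∑ₙ Pₙ T Pₙ` converges in the
strong operator topology and its limit is a compact operator. -/
theorem stmt_2 {H : Type*} [NormedAddCommGroup H] [InnerProductSpace ℂ H] [CompleteSpace H]
    [TopologicalSpace.SeparableSpace H]
    (T : H →L[ℂ] H) (hT : IsCompactOperator (⇑T))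
    (P : ℕ → H →L[ℂ] H) (hP : ∀ n, IsOrthoProj (P n))
    (hPo : ∀ m n, m ≠ n → P m ∘L P n = 0) :
    ∃ S : H →L[ℂ] H, IsCompactOperator (⇑S) ∧
      ∀ x : H, Tendsto (fun N : ℕ => ∑ n ∈ Finset.range N, (P n) (T ((P n) x)))
        atTop (𝓝 (S x)) := by
  classical
  set f : ℕ → H →L[ℂ] H := fun n => P n ∘L T ∘L P n with hf
  have hfapp : ∀ n x, f n x = P n (T (P n x)) := fun n x => rfl
  -- each finite partial sum is a compact operator
  have hcomp : ∀ s : Finset ℕ, IsCompactOperator ⇑(∑ n ∈ s, f n) := by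
    intro s
    induction s using Finset.induction_on with
    | empty => simpa using (isCompactOperator_zero : IsCompactOperator (0 : H → H))
    | @insert a s ha ih =>
      rw [Finset.sum_insert ha]
      have h1 : IsCompactOperator ⇑(f a) := by
        have h2 := (hT.comp_clm (P a)).clm_comp (P a)
        have h3 : ⇑(f a) = ⇑(P a) ∘ (⇑T ∘ ⇑(P a)) := by
          funext x; simp [hfapp, Function.comp]
        rw [h3]; exact h2
      have h4 := h1.add ih
      have h5 : ⇑(f a + ∑ n ∈ s, f n) = ⇑(f a) + ⇑(∑ n ∈ s, f n) := by
        funext x; simp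
      rw [h5]; exact h4
  -- the series is summable in operator norm
  have hsummable : Summable f := by
    rw [summable_iff_vanishing_norm]
    intro ε hε
    obtain ⟨K, hK, hKsub⟩ := hT.image_closedBall_subset_compact 1
    set ε' : ℝ := ε / 4 with hε'
    have hε'pos : 0 < ε' := by positivity
    obtain ⟨c, hcfin, hcover⟩ := (Metric.totallyBounded_iff.mp hK.totallyBounded) ε' hε'pos
    set cF := hcfin.toFinset with hcF
    set F : ℕ → ℝ := fun n => ∑ y ∈ cF, ‖P n y‖ ^ 2 with hF
    have hFsummable : Summable F := by
      refine summable_sum fun y _ => ?_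
      apply summable_of_sum_range_le (c := ‖y‖ ^ 2) (fun n => sq_nonneg _)
      intro n
      exact bessel_aux hP hPo (Finset.range n) y
    set δ : ℝ := ε ^ 2 / 16 with hδ
    obtain ⟨s, hs⟩ := summable_iff_vanishing_norm.mp hFsummable δ (by positivity)
    refine ⟨s, fun t ht => ?_⟩
    have key : ∀ x : H, ‖(∑ n ∈ t, f n) x‖ ^ 2 ≤ (ε / 2) ^ 2 * ‖x‖ ^ 2 := by
      intro x
      rw [ContinuousLinearMap.sum_apply]
      have hp : ‖∑ n ∈ t, f n x‖ ^ 2 = ∑ n ∈ t, ‖f n x‖ ^ 2 :=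
        pyth_aux t (fun n => f n x)
          (fun i _ j _ hij => ortho_aux hP hPo hij (T (P i x)) (T (P j x)))
      rw [hp]
      have hterm : ∀ n ∈ t,
          ‖f n x‖ ^ 2 ≤ 2 * ε' ^ 2 * ‖P n x‖ ^ 2 + 2 * ‖x‖ ^ 2 * F n := by
        intro n _
        rcases eq_or_ne (P n x) 0 with h0 | h0
        · have hz : f n x = 0 := by simp [hfapp, h0]
          rw [hz]
          have : (0:ℝ) ≤ 2 * ‖x‖ ^ 2 * F n := by
            have : (0:ℝ) ≤ F n := Finset.sum_nonneg fun _ _ => sq_nonneg _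
            positivity
          simpa using by positivity
        · set tn : ℝ := ‖P n x‖ with htn
          have htnpos : 0 < tn := norm_pos_iff.mpr h0
          set u : H := ((tn : ℂ))⁻¹ • P n x with hu
          have hun : ‖u‖ = 1 := by
            rw [hu, norm_smul, norm_inv, Complex.norm_real, Real.norm_eq_abs,
              abs_of_pos htnpos]
            exact inv_mul_cancel₀ htnpos.ne'
          have hPx : P n x = (tn : ℂ) • u := by
            rw [hu, smul_smul, mul_inv_cancel₀
              (by exact_mod_cast htnpos.ne' : (tn : ℂ) ≠ 0), one_smul]
          have hTu : T u ∈ K := hKsub ⟨u, by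
            simpa [Metric.mem_closedBall, dist_zero_right] using hun.le, rfl⟩
          obtain ⟨y, hyc, hyball⟩ := Set.mem_iUnion₂.mp (hcover hTu)
          have hyF : y ∈ cF := hcfin.mem_toFinset.mpr hyc
          have hdist : ‖T u - y‖ < ε' := by
            rwa [← dist_eq_norm]
          have h1 : ‖f n x‖ ≤ tn * (ε' + ‖P n y‖) := by
            have he : f n x = (tn : ℂ) • P n (T u) := by
              rw [hfapp, hPx, map_smul, map_smul]
            rw [he, norm_smul, Complex.norm_real, Real.norm_eq_abs, abs_of_pos htnpos]
            have h6 : ‖P n (T u)‖ ≤ ε' + ‖P n y‖ := by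
              calc ‖P n (T u)‖ = ‖P n (T u - y) + P n y‖ := by
                    rw [map_sub, sub_add_cancel]
                _ ≤ ‖P n (T u - y)‖ + ‖P n y‖ := norm_add_le _ _
                _ ≤ ‖T u - y‖ + ‖P n y‖ :=
                    add_le_add_left ((hP n).norm_apply_le _) _
                _ ≤ ε' + ‖P n y‖ := add_le_add_left hdist.le _
            exact mul_le_mul_of_nonneg_left h6 htnpos.le
          have hsq : ‖f n x‖ ^ 2 ≤ tn ^ 2 * (ε' + ‖P n y‖) ^ 2 := by
            have := pow_le_pow_left₀ (norm_nonneg (f n x)) h1 2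
            calc ‖f n x‖ ^ 2 ≤ (tn * (ε' + ‖P n y‖)) ^ 2 := this
              _ = tn ^ 2 * (ε' + ‖P n y‖) ^ 2 := by ring
          have hPny_le : ‖P n y‖ ^ 2 ≤ F n :=
            Finset.single_le_sum (f := fun y' => ‖P n y'‖ ^ 2)
              (fun _ _ => sq_nonneg _) hyF
          have htn_le : tn ≤ ‖x‖ := (hP n).norm_apply_le x
          have h3 : tn ^ 2 ≤ ‖x‖ ^ 2 := pow_le_pow_left₀ htnpos.le htn_le 2
          nlinarith [hsq, mul_nonneg (sq_nonneg tn) (sq_nonneg (ε' - ‖P n y‖)),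
            mul_nonneg (sub_nonneg.mpr h3) (sq_nonneg ‖P n y‖),
            mul_nonneg (sq_nonneg ‖x‖) (sub_nonneg.mpr hPny_le)]
      have hFsum : ∑ n ∈ t, F n ≤ δ := by
        have h7 := hs t ht
        have hnonneg : 0 ≤ ∑ n ∈ t, F n :=
          Finset.sum_nonneg fun n _ => Finset.sum_nonneg fun _ _ => sq_nonneg _
        rw [Real.norm_eq_abs, abs_of_nonneg hnonneg] at h7
        exact h7.le
      have hbessel := bessel_aux hP hPo t x
      calc ∑ n ∈ t, ‖f n x‖ ^ 2
          ≤ ∑ n ∈ t, (2 * ε' ^ 2 * ‖P n x‖ ^ 2 + 2 * ‖x‖ ^ 2 * F n) :=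
            Finset.sum_le_sum hterm
        _ = 2 * ε' ^ 2 * ∑ n ∈ t, ‖P n x‖ ^ 2 + 2 * ‖x‖ ^ 2 * ∑ n ∈ t, F n := by
            rw [Finset.sum_add_distrib, Finset.mul_sum, Finset.mul_sum]
        _ ≤ 2 * ε' ^ 2 * ‖x‖ ^ 2 + 2 * ‖x‖ ^ 2 * δ :=
            add_le_add (mul_le_mul_of_nonneg_left hbessel (by positivity))
              (mul_le_mul_of_nonneg_left hFsum (by positivity))
        _ ≤ (ε / 2) ^ 2 * ‖x‖ ^ 2 := by
            rw [hε', hδ]; nlinarith [sq_nonneg ‖x‖]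
    have hopnorm : ‖∑ n ∈ t, f n‖ ≤ ε / 2 := by
      apply ContinuousLinearMap.opNorm_le_bound _ (by positivity)
      intro x
      have h8 := key x
      have hb : (0:ℝ) ≤ ε / 2 * ‖x‖ := by positivity
      nlinarith [h8, hb, norm_nonneg ((∑ n ∈ t, f n) x)]
    exact lt_of_le_of_lt hopnorm (by linarith)
  have hhas := hsummable.hasSum
  refine ⟨∑' n, f n, ?_, ?_⟩
  · exact isCompactOperator_of_tendsto hhas.tendsto_sum_nat
      (Eventually.of_forall fun N => hcomp (Finset.range N))
  · intro x
    have h1 : Tendsto (fun N => (∑ n ∈ Finset.range N, f n) x) atTop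
        (𝓝 ((∑' n, f n) x)) := by
      have hc := (ContinuousLinearMap.apply ℂ H x).continuous.tendsto (∑' n, f n)
      exact hc.comp hhas.tendsto_sum_nat
    have h2 : ∀ N, (∑ n ∈ Finset.range N, f n) x
        = ∑ n ∈ Finset.range N, P n (T (P n x)) := by
      intro N
      rw [ContinuousLinearMap.sum_apply]
      exact Finset.sum_congr rfl fun n _ => hfapp n x
    simpa only [h2] using h1
end

section
/- Let T be a bounded operator that is a block band operator of bandwidth M relative to block decompositions (Pₙ) and (Qₙ), i.e., Qᵢ T Pⱼ = 0 whenever |i−j| > M. Then for each k with |k| ≤ M, the k-th block diagonal T_k = ∑ₙ Qₙ T P_{n+k} can be written as a finite sum ∑_{j=-M}^{M} Sⱼ T R_{k,j} where Sⱼ and R_{k,j} are orthogonal projections; in particular T_k lies in the two-sided ideal of B(H) generated by T. -/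
open ContinuousLinearMap

set_option linter.unusedSectionVars false
set_option linter.unusedVariables false
set_option maxHeartbeats 1000000

open scoped InnerProductSpace

section helpers
variable {H : Type*} [NormedAddCommGroup H] [InnerProductSpace ℂ H] [CompleteSpace H]

lemma pyth {ι : Type*} (f : ι → H) (ho : ∀ m n, m ≠ n → ⟪f m, f n⟫_ℂ = 0) (t : Finset ι) :
    ‖∑ n ∈ t, f n‖ ^ 2 = ∑ n ∈ t, ‖f n‖ ^ 2 := by
  have h1 : ⟪∑ n ∈ t, f n, ∑ n ∈ t, f n⟫_ℂ = ∑ n ∈ t, ⟪f n, f n⟫_ℂ := by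
    rw [sum_inner]
    refine Finset.sum_congr rfl fun m hm => ?_
    rw [inner_sum]
    exact Finset.sum_eq_single m (fun n _ hne => ho m n (Ne.symm hne)) (fun h => absurd hm h)
  have h2 := inner_self_eq_norm_sq (𝕜 := ℂ) (∑ n ∈ t, f n)
  rw [← h2, h1, map_sum]
  exact Finset.sum_congr rfl fun n _ => inner_self_eq_norm_sq (𝕜 := ℂ) (f n)

lemma hasSum_norm_sq {ι : Type*} {f : ι → H} {x : H}
    (ho : ∀ m n, m ≠ n → ⟪f m, f n⟫_ℂ = 0) (h : HasSum f x) :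
    HasSum (fun i => ‖f i‖ ^ 2) (‖x‖ ^ 2) := by
  have hc : Continuous fun y : H => ‖y‖ ^ 2 := (continuous_norm).pow 2
  exact ((hc.tendsto x).comp h).congr fun s => pyth f ho s

lemma summable_comp_inj {ι ι' : Type*} {f : ι → H}
    (hf : Summable f) (σ : ι' → ι) (hσ : Function.Injective σ) :
    Summable fun n => f (σ n) := by
  classical
  rw [summable_iff_vanishing_norm] at hf ⊢
  intro ε hε
  obtain ⟨s, hs⟩ := hf ε hε
  refine ⟨s.preimage σ (hσ.injOn), fun t ht => ?_⟩
  have h1 : ∑ i ∈ t, f (σ i) = ∑ i ∈ t.image σ, f i :=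
    (Finset.sum_image (fun a _ b _ h => hσ h)).symm
  rw [h1]
  refine hs _ ?_
  rw [Finset.disjoint_left]
  rintro a ha has
  obtain ⟨b, hb, rfl⟩ := Finset.mem_image.mp ha
  exact Finset.disjoint_left.mp ht hb (Finset.mem_preimage.mpr has)

variable (Q : ℤ → H →L[ℂ] H) (σ : ℤ → ℤ)

/-- orthogonality of the vectors `Q n x`. -/
lemma vec_orth (hQsym : ∀ n, (Q n : H →ₗ[ℂ] H).IsSymmetric)
    (hQo : ∀ m n, m ≠ n → Q m ∘L Q n = 0) (x : H) :
    ∀ m n, m ≠ n → ⟪Q m x, Q n x⟫_ℂ = 0 := by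
  intro m n hmn
  have h1 : ⟪Q m x, Q n x⟫_ℂ = ⟪x, Q m (Q n x)⟫_ℂ := hQsym m x (Q n x)
  have h2 : Q m (Q n x) = (Q m ∘L Q n) x := rfl
  rw [h1, h2, hQo m n hmn]
  simp

lemma diag_summable (hQsym : ∀ n, (Q n : H →ₗ[ℂ] H).IsSymmetric)
    (hQo : ∀ m n, m ≠ n → Q m ∘L Q n = 0)
    (hQI : ∀ x : H, HasSum (fun n : ℤ => (Q n) x) x)
    (hσ : Function.Injective σ) (x : H) :
    Summable fun n : ℤ => Q (σ n) x :=
  summable_comp_inj (hQI x).summable σ hσ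

lemma diag_norm_le (hQsym : ∀ n, (Q n : H →ₗ[ℂ] H).IsSymmetric)
    (hQo : ∀ m n, m ≠ n → Q m ∘L Q n = 0)
    (hQI : ∀ x : H, HasSum (fun n : ℤ => (Q n) x) x)
    (hσ : Function.Injective σ) (x : H) :
    ‖∑' n : ℤ, Q (σ n) x‖ ≤ ‖x‖ := by
  have ho := vec_orth Q hQsym hQo x
  have hsum := diag_summable Q σ hQsym hQo hQI hσ x
  have h1 : HasSum (fun n : ℤ => ‖Q (σ n) x‖ ^ 2) (‖∑' n : ℤ, Q (σ n) x‖ ^ 2) :=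
    hasSum_norm_sq (fun m n hmn => ho _ _ (fun h => hmn (hσ h))) hsum.hasSum
  have h2 : HasSum (fun n : ℤ => ‖Q n x‖ ^ 2) (‖x‖ ^ 2) := hasSum_norm_sq ho (hQI x)
  have hle : (‖∑' n : ℤ, Q (σ n) x‖ ^ 2) ≤ ‖x‖ ^ 2 := by
    rw [← h1.tsum_eq, ← h2.tsum_eq]
    exact Summable.tsum_le_tsum_of_inj σ hσ (fun c _ => sq_nonneg _) (fun n => le_rfl)
      h1.summable h2.summable
  nlinarith [norm_nonneg (∑' n : ℤ, Q (σ n) x), norm_nonneg x]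

/-- The SOT-sum `∑ₙ Q (σ n)` as a continuous linear map. -/
noncomputable def diagProj (hQsym : ∀ n, (Q n : H →ₗ[ℂ] H).IsSymmetric)
    (hQo : ∀ m n, m ≠ n → Q m ∘L Q n = 0)
    (hQI : ∀ x : H, HasSum (fun n : ℤ => (Q n) x) x)
    (hσ : Function.Injective σ) : H →L[ℂ] H :=
  LinearMap.mkContinuous
    { toFun := fun x => ∑' n : ℤ, Q (σ n) x
      map_add' := fun x y => by
        have h := ((diag_summable Q σ hQsym hQo hQI hσ x).hasSum.add
          (diag_summable Q σ hQsym hQo hQI hσ y).hasSum)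
        have h2 : HasSum (fun n : ℤ => Q (σ n) (x + y))
            ((∑' n : ℤ, Q (σ n) x) + ∑' n : ℤ, Q (σ n) y) := by
          simpa [map_add] using h
        exact h2.tsum_eq
      map_smul' := fun c x => by
        have h := (diag_summable Q σ hQsym hQo hQI hσ x).hasSum.const_smul c
        have h2 : HasSum (fun n : ℤ => Q (σ n) (c • x)) (c • ∑' n : ℤ, Q (σ n) x) := by
          simpa [map_smul] using h
        exact h2.tsum_eq }
    1 (fun x => by
      simpa using diag_norm_le Q σ hQsym hQo hQI hσ x)

lemma diagProj_apply (hQsym) (hQo) (hQI) (hσ) (x : H) :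
    diagProj Q σ hQsym hQo hQI hσ x = ∑' n : ℤ, Q (σ n) x := rfl

lemma diagProj_hasSum (hQsym) (hQo) (hQI) (hσ) (x : H) :
    HasSum (fun n : ℤ => Q (σ n) x) (diagProj Q σ hQsym hQo hQI hσ x) :=
  (diag_summable Q σ hQsym hQo hQI hσ x).hasSum

lemma diagProj_isOrthoProj (hQsym : ∀ n, (Q n : H →ₗ[ℂ] H).IsSymmetric)
    (hQidem : ∀ n, Q n ∘L Q n = Q n)
    (hQo : ∀ m n, m ≠ n → Q m ∘L Q n = 0)
    (hQI : ∀ x : H, HasSum (fun n : ℤ => (Q n) x) x)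
    (hσ : Function.Injective σ) :
    IsOrthoProj (diagProj Q σ hQsym hQo hQI hσ) := by
  set S := diagProj Q σ hQsym hQo hQI hσ with hS
  constructor
  · ext x
    have hkey : ∀ m : ℤ, Q (σ m) (S x) = Q (σ m) x := by
      intro m
      have h1 : HasSum (fun n : ℤ => Q (σ m) (Q (σ n) x)) (Q (σ m) (S x)) :=
        (diagProj_hasSum Q σ hQsym hQo hQI hσ x).mapL (Q (σ m))
      have h2 : HasSum (fun n : ℤ => Q (σ m) (Q (σ n) x)) (Q (σ m) x) := by
        have h3 : Q (σ m) (Q (σ m) x) = Q (σ m) x := by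
          conv_rhs => rw [← hQidem (σ m)]
          rfl
        have := hasSum_single (f := fun n : ℤ => Q (σ m) (Q (σ n) x)) m
          (fun n hn => by
            have : Q (σ m) ∘L Q (σ n) = 0 := hQo _ _ (fun h => hn (hσ h).symm)
            calc Q (σ m) (Q (σ n) x) = (Q (σ m) ∘L Q (σ n)) x := rfl
            _ = 0 := by rw [this]; rfl)
        simpa [h3] using this
      exact h1.unique h2
    calc (S ∘L S) x = S (S x) := rfl
    _ = ∑' m : ℤ, Q (σ m) (S x) := diagProj_apply ..
    _ = ∑' m : ℤ, Q (σ m) x := tsum_congr hkey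
    _ = S x := (diagProj_apply ..).symm
  · rw [ContinuousLinearMap.isSelfAdjoint_iff_isSymmetric]
    intro x y
    have h2 : HasSum (fun n : ℤ => ⟪x, Q (σ n) y⟫_ℂ) ⟪x, S y⟫_ℂ :=
      (diagProj_hasSum Q σ hQsym hQo hQI hσ y).mapL (innerSL ℂ x)
    have h3 : HasSum (fun n : ℤ => (starRingEnd ℂ) ⟪y, Q (σ n) x⟫_ℂ)
        ((starRingEnd ℂ) ⟪y, S x⟫_ℂ) :=
      ((diagProj_hasSum Q σ hQsym hQo hQI hσ x).mapL (innerSL ℂ y)).star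
    have h4 : (fun n : ℤ => (starRingEnd ℂ) ⟪y, Q (σ n) x⟫_ℂ)
        = fun n : ℤ => ⟪x, Q (σ n) y⟫_ℂ := by
      funext n
      rw [inner_conj_symm]
      exact hQsym (σ n) x y
    rw [h4] at h3
    have h5 := h3.unique h2
    show ⟪S x, y⟫_ℂ = ⟪x, S y⟫_ℂ
    rw [← h5]
    exact (inner_conj_symm _ _).symm

end helpers

/-- Let `T` be an (asymmetric) block band operator of bandwidth `M` relative to the block
decompositions `(Pₙ)_{n ∈ ℤ}` and `(Qₙ)_{n ∈ ℤ}` (mutually orthogonal projections summing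
strongly to the identity), i.e. `Qᵢ T Pⱼ = 0` whenever `|i − j| > M`.  Then for each `k` with
`|k| ≤ M`, the `k`-th block diagonal `T_k = ∑ₙ Qₙ T P_{n+k}` (SOT limit) is a finite sum
`∑_{j=-M}^{M} Sⱼ T R_{k,j}` where `Sⱼ = ∑ₙ Q_{n(2M+1)+j}` and `R_{k,j} = ∑ₙ P_{n(2M+1)+j+k}`
are orthogonal projections; in particular `T_k` lies in the two-sided ideal generated by `T`. -/
theorem stmt_7 {H : Type*} [NormedAddCommGroup H] [InnerProductSpace ℂ H] [CompleteSpace H]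
    [TopologicalSpace.SeparableSpace H]
    (T : H →L[ℂ] H) (M : ℕ)
    (P Q : ℤ → H →L[ℂ] H)
    (hP : ∀ n, IsOrthoProj (P n)) (hQ : ∀ n, IsOrthoProj (Q n))
    (hPo : ∀ m n, m ≠ n → P m ∘L P n = 0) (hQo : ∀ m n, m ≠ n → Q m ∘L Q n = 0)
    (hPI : ∀ x : H, HasSum (fun n : ℤ => (P n) x) x)
    (hQI : ∀ x : H, HasSum (fun n : ℤ => (Q n) x) x)
    (hband : ∀ i j : ℤ, |i - j| > (M : ℤ) → Q i ∘L T ∘L P j = 0)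
    (k : ℤ) (hk : |k| ≤ (M : ℤ))
    (Tk : H →L[ℂ] H)
    (hTk : ∀ x : H, HasSum (fun n : ℤ => (Q n) (T ((P (n + k)) x))) (Tk x)) :
    ∃ S R : ℤ → H →L[ℂ] H,
      (∀ j, IsOrthoProj (S j)) ∧ (∀ j, IsOrthoProj (R j)) ∧
      (∀ j, ∀ x : H,
        HasSum (fun n : ℤ => (Q (n * (2 * (M : ℤ) + 1) + j)) x) ((S j) x)) ∧
      (∀ j, ∀ x : H,
        HasSum (fun n : ℤ => (P (n * (2 * (M : ℤ) + 1) + j + k)) x) ((R j) x)) ∧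
      Tk = ∑ j ∈ Finset.Icc (-(M : ℤ)) (M : ℤ), S j ∘L T ∘L R j ∧
      Tk ∈ TwoSidedIdeal.span {T} := by
  classical
  have hQsym : ∀ n, ((Q n) : H →ₗ[ℂ] H).IsSymmetric :=
    fun n => ContinuousLinearMap.isSelfAdjoint_iff_isSymmetric.mp (hQ n).2
  have hPsym : ∀ n, ((P n) : H →ₗ[ℂ] H).IsSymmetric :=
    fun n => ContinuousLinearMap.isSelfAdjoint_iff_isSymmetric.mp (hP n).2
  have hM0 : (0 : ℤ) ≤ (M : ℤ) := Int.natCast_nonneg M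
  have hWpos : (0 : ℤ) < 2 * (M : ℤ) + 1 := by omega
  have hσinj : ∀ j : ℤ, Function.Injective (fun n : ℤ => n * (2 * (M : ℤ) + 1) + j) := by
    intro j a b h
    simp only [add_left_inj] at h
    exact mul_right_cancel₀ (by omega) h
  have hσinj' : ∀ j : ℤ, Function.Injective (fun n : ℤ => n * (2 * (M : ℤ) + 1) + j + k) := by
    intro j a b h
    simp only [add_left_inj] at h
    exact mul_right_cancel₀ (by omega) h
  set S : ℤ → H →L[ℂ] H := fun j =>
    diagProj Q (fun n : ℤ => n * (2 * (M : ℤ) + 1) + j) hQsym hQo hQI (hσinj j) with hSdef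
  set R : ℤ → H →L[ℂ] H := fun j =>
    diagProj P (fun n : ℤ => n * (2 * (M : ℤ) + 1) + j + k) hPsym hPo hPI (hσinj' j) with hRdef
  -- the band gap estimate
  have habs : ∀ j m n : ℤ, m ≠ n →
      |(m * (2 * (M : ℤ) + 1) + j) - (n * (2 * (M : ℤ) + 1) + j + k)| > (M : ℤ) := by
    intro j m n hmn
    have h1 : (1 : ℤ) ≤ |m - n| := Int.one_le_abs (sub_ne_zero.mpr hmn)
    have h2 : (m * (2 * (M : ℤ) + 1) + j) - (n * (2 * (M : ℤ) + 1) + j + k)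
        = (m - n) * (2 * (M : ℤ) + 1) - k := by ring
    rw [h2]
    have h3 : |(m - n) * (2 * (M : ℤ) + 1)| = |m - n| * (2 * (M : ℤ) + 1) := by
      rw [abs_mul, abs_of_pos hWpos]
    have h4 : |(m - n) * (2 * (M : ℤ) + 1)| - |k|
        ≤ |(m - n) * (2 * (M : ℤ) + 1) - k| := abs_sub_abs_le_abs_sub _ _
    nlinarith
  -- key pointwise identity
  have key : ∀ x : H, Tk x = ∑ j ∈ Finset.Icc (-(M : ℤ)) (M : ℤ), (S j ∘L T ∘L R j) x := by
    intro x
    set g : ℤ → H := fun n => Q n (T (P (n + k) x)) with hg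
    have hgsum : Summable g := (hTk x).summable
    -- Step A/B : value of each block
    have stepB : ∀ j : ℤ, (S j ∘L T ∘L R j) x
        = ∑' m : ℤ, g (m * (2 * (M : ℤ) + 1) + j) := by
      intro j
      have stepA : ∀ m : ℤ, Q (m * (2 * (M : ℤ) + 1) + j) (T (R j x))
          = g (m * (2 * (M : ℤ) + 1) + j) := by
        intro m
        have h1 : HasSum (fun n : ℤ => P (n * (2 * (M : ℤ) + 1) + j + k) x) (R j x) :=
          diagProj_hasSum P _ hPsym hPo hPI (hσinj' j) x
        have h2 := h1.mapL (Q (m * (2 * (M : ℤ) + 1) + j) ∘L T)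
        have h3 : HasSum
            (fun n : ℤ => (Q (m * (2 * (M : ℤ) + 1) + j) ∘L T)
              (P (n * (2 * (M : ℤ) + 1) + j + k) x))
            (g (m * (2 * (M : ℤ) + 1) + j)) := by
          have := hasSum_single
            (f := fun n : ℤ => (Q (m * (2 * (M : ℤ) + 1) + j) ∘L T)
              (P (n * (2 * (M : ℤ) + 1) + j + k) x)) m
            (fun n hn => by
              have hz := hband (m * (2 * (M : ℤ) + 1) + j) (n * (2 * (M : ℤ) + 1) + j + k)
                (habs j m n (fun h => hn h.symm))
              calc (Q (m * (2 * (M : ℤ) + 1) + j) ∘L T) (P (n * (2 * (M : ℤ) + 1) + j + k) x)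
                  = (Q (m * (2 * (M : ℤ) + 1) + j) ∘L T ∘L P (n * (2 * (M : ℤ) + 1) + j + k)) x :=
                    rfl
                _ = 0 := by rw [hz]; rfl)
          simpa [hg] using this
        exact h2.unique h3
      calc (S j ∘L T ∘L R j) x = S j (T (R j x)) := rfl
      _ = ∑' m : ℤ, Q (m * (2 * (M : ℤ) + 1) + j) (T (R j x)) := diagProj_apply ..
      _ = ∑' m : ℤ, g (m * (2 * (M : ℤ) + 1) + j) := tsum_congr stepA
    -- Step C : rewrite as an indicator sum
    have stepC : ∀ j : ℤ, (∑' m : ℤ, g (m * (2 * (M : ℤ) + 1) + j))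
        = ∑' n : ℤ, (Set.range (fun m : ℤ => m * (2 * (M : ℤ) + 1) + j)).indicator g n := by
      intro j
      have h1 : (∑' m : ℤ, g (m * (2 * (M : ℤ) + 1) + j))
          = ∑' a : Set.range (fun m : ℤ => m * (2 * (M : ℤ) + 1) + j), g ↑a := by
        rw [← (Equiv.ofInjective _ (hσinj j)).tsum_eq
          (fun a : Set.range (fun m : ℤ => m * (2 * (M : ℤ) + 1) + j) => g ↑a)]
        exact tsum_congr fun m => by rw [Equiv.ofInjective_apply]
      rw [h1]
      exact tsum_subtype _ _
    -- partition of unity over residues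
    have hpart : ∀ n : ℤ, (∑ j ∈ Finset.Icc (-(M : ℤ)) (M : ℤ),
        (Set.range (fun m : ℤ => m * (2 * (M : ℤ) + 1) + j)).indicator g n) = g n := by
      intro n
      set j₀ : ℤ := (n + M) % (2 * (M : ℤ) + 1) - M with hj₀
      have hem := Int.emod_nonneg (n + M) (by omega : (2 * (M : ℤ) + 1) ≠ 0)
      have hel := Int.emod_lt_of_pos (n + M) hWpos
      have hmem : j₀ ∈ Finset.Icc (-(M : ℤ)) (M : ℤ) := by
        rw [Finset.mem_Icc]; omega
      have hrange : n ∈ Set.range (fun m : ℤ => m * (2 * (M : ℤ) + 1) + j₀) := by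
        refine ⟨(n + M) / (2 * (M : ℤ) + 1), ?_⟩
        have hde := Int.mul_ediv_add_emod (n + M) (2 * (M : ℤ) + 1)
        simp only []
        linarith [hde]
      rw [Finset.sum_eq_single_of_mem j₀ hmem]
      · exact Set.indicator_of_mem hrange g
      · intro j hj hne
        refine Set.indicator_of_notMem ?_ g
        rintro ⟨m, hmn⟩
        simp only [] at hmn
        rw [Finset.mem_Icc] at hj
        have h1 : n + M = (j + M) + (2 * (M : ℤ) + 1) * m := by rw [← hmn]; ring
        have h2 : (n + M) % (2 * (M : ℤ) + 1) = j + M := by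
          rw [h1, Int.add_mul_emod_self_left, Int.emod_eq_of_lt (by omega) (by omega)]
        exact hne (by omega)
    -- assemble
    have h6 : Tk x = ∑' n : ℤ, g n := (hTk x).tsum_eq.symm
    rw [h6]
    have h7 : (∑' n : ℤ, g n) = ∑' n : ℤ, ∑ j ∈ Finset.Icc (-(M : ℤ)) (M : ℤ),
        (Set.range (fun m : ℤ => m * (2 * (M : ℤ) + 1) + j)).indicator g n :=
      tsum_congr fun n => (hpart n).symm
    rw [h7, Summable.tsum_finsetSum (fun j _ => hgsum.indicator _)]
    exact Finset.sum_congr rfl fun j _ => by rw [stepB j, stepC j]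
  have heq : Tk = ∑ j ∈ Finset.Icc (-(M : ℤ)) (M : ℤ), S j ∘L T ∘L R j := by
    ext x
    rw [key x]
    simp [ContinuousLinearMap.sum_apply]
  refine ⟨S, R, ?_, ?_, ?_, ?_, heq, ?_⟩
  · exact fun j => diagProj_isOrthoProj Q _ hQsym (fun n => (hQ n).1) hQo hQI (hσinj j)
  · exact fun j => diagProj_isOrthoProj P _ hPsym (fun n => (hP n).1) hPo hPI (hσinj' j)
  · exact fun j x => diagProj_hasSum Q _ hQsym hQo hQI (hσinj j) x
  · exact fun j x => diagProj_hasSum P _ hPsym hPo hPI (hσinj' j) x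
  · rw [heq]
    refine sum_mem fun j _ => ?_
    have h : S j ∘L T ∘L R j = S j * (T * R j) := rfl
    rw [h]
    exact TwoSidedIdeal.mul_mem_left _ _ _
      (TwoSidedIdeal.mul_mem_right _ _ _
        (TwoSidedIdeal.subset_span (Set.mem_singleton T)))
end

section
/- Fan's theorem for finite matrices: if A is an n×n complex matrix with diagonal entries d₁,…,dₙ, then for every m ≤ n, the sum of the m largest values among |d₁|,…,|dₙ| is at most the sum of the m largest singular values of A. -/
open scoped ComplexOrder

/-- The singular values of a square complex matrix, as the square roots of the eigenvalues of
`Aᴴ * A` (unordered; order is irrelevant for `sumTop` below). -/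
noncomputable def singVals {N : ℕ} (A : Matrix (Fin N) (Fin N) ℂ) : Fin N → ℝ :=
  fun i => Real.sqrt ((Matrix.posSemidef_conjTranspose_mul_self A).isHermitian.eigenvalues i)

/-- The sum of the `m` largest values of a finite family `f : Fin N → ℝ`, expressed as the
supremum of the sums over subsets of cardinality `min m N`. -/
noncomputable def sumTop {N : ℕ} (f : Fin N → ℝ) (m : ℕ) : ℝ :=
  sSup {x | ∃ s : Finset (Fin N), s.card = min m N ∧ x = ∑ i ∈ s, f i}

open Matrix



lemma sumTop_set_eq {N : ℕ} (f : Fin N → ℝ) (m : ℕ) :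
    {x | ∃ s : Finset (Fin N), s.card = min m N ∧ x = ∑ i ∈ s, f i} =
      ↑(((Finset.univ : Finset (Fin N)).powersetCard (min m N)).image
        fun s => ∑ i ∈ s, f i) := by
  ext x
  simp [Finset.mem_powersetCard_univ, eq_comm]

lemma powersetCard_nonempty {N m : ℕ} :
    ((Finset.univ : Finset (Fin N)).powersetCard (min m N)).Nonempty := by
  apply Finset.powersetCard_nonempty.2
  simpa using min_le_right m N

lemma le_sumTop {N : ℕ} (f : Fin N → ℝ) (m : ℕ) (s : Finset (Fin N))
    (hs : s.card = min m N) : ∑ i ∈ s, f i ≤ sumTop f m := by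
  rw [sumTop, sumTop_set_eq]
  exact le_csSup (Finset.bddAbove _) (by
    simp only [Finset.coe_image, Set.mem_image, Finset.mem_coe,
      Finset.mem_powersetCard_univ]
    exact ⟨s, hs, rfl⟩)

lemma sumTop_le {N : ℕ} (f : Fin N → ℝ) (m : ℕ) (b : ℝ)
    (h : ∀ s : Finset (Fin N), s.card = min m N → ∑ i ∈ s, f i ≤ b) :
    sumTop f m ≤ b := by
  rw [sumTop, sumTop_set_eq]
  apply csSup_le ((Finset.coe_nonempty).2 (powersetCard_nonempty.image _))
  rintro x hx
  simp only [Finset.coe_image, Set.mem_image, Finset.mem_coe,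
    Finset.mem_powersetCard_univ] at hx
  obtain ⟨s, hs, rfl⟩ := hx
  exact h s hs

/-- Combinatorial lemma: if `0 ≤ c ≤ 1`, `∑ c ≤ m`, `σ ≥ 0`, then `∑ c σ ≤ sumTop σ m`. -/
lemma sum_mul_le_sumTop {N m : ℕ} (hm : m ≤ N) (σ c : Fin N → ℝ)
    (hσ : ∀ j, 0 ≤ σ j) (hc0 : ∀ j, 0 ≤ c j) (hc1 : ∀ j, c j ≤ 1)
    (hcs : ∑ j, c j ≤ (m : ℝ)) : ∑ j, c j * σ j ≤ sumTop σ m := by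
  have hmin : min m N = m := min_eq_left hm
  -- choose a maximizing subset of cardinality m
  obtain ⟨s, hsmem, hsmax⟩ := Finset.exists_max_image
    ((Finset.univ : Finset (Fin N)).powersetCard m) (fun s => ∑ i ∈ s, σ i)
    (Finset.powersetCard_nonempty.2 (by simpa using hm))
  rw [Finset.mem_powersetCard_univ] at hsmem
  have hkey : ∀ i ∈ s, ∀ j, j ∉ s → σ j ≤ σ i := by
    intro i hi j hj
    by_contra hlt
    push_neg at hlt
    have hpos : 0 < s.card := Finset.card_pos.2 ⟨i, hi⟩
    have h2 : ∑ x ∈ insert j (s.erase i), σ x > ∑ x ∈ s, σ x := by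
      rw [Finset.sum_insert (by simp [hj, Finset.mem_erase]),
        Finset.sum_erase_eq_sub hi]
      linarith
    have hcard : (insert j (s.erase i)).card = m := by
      rw [Finset.card_insert_of_notMem (by simp [hj, Finset.mem_erase]),
        Finset.card_erase_of_mem hi]
      omega
    exact absurd (hsmax _ (Finset.mem_powersetCard_univ.2 hcard)) (not_le.2 h2)
  have hfinal : ∑ j, c j * σ j ≤ ∑ i ∈ s, σ i := by
    rcases Nat.eq_zero_or_pos m with rfl | hm0
    · have hs0 : s = ∅ := Finset.card_eq_zero.1 hsmem
      have : ∀ j, c j = 0 := by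
        intro j
        have h1 : ∑ j, c j ≤ 0 := by exact_mod_cast hcs
        have h2 : (0:ℝ) ≤ ∑ j, c j := Finset.sum_nonneg fun j _ => hc0 j
        have := Finset.sum_eq_zero_iff_of_nonneg (fun j _ => hc0 j) |>.1
          (le_antisymm h1 h2)
        exact this j (Finset.mem_univ j)
      simp [hs0, this]
    · have hsne : s.Nonempty := Finset.card_pos.1 (by omega)
      set t := s.inf' hsne σ with ht
      have ht0 : 0 ≤ t := Finset.le_inf' hsne σ fun i _ => hσ i
      have hts : ∀ i ∈ s, t ≤ σ i := fun i hi => Finset.inf'_le σ hi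
      obtain ⟨i0, hi0, hti0⟩ := Finset.exists_mem_eq_inf' hsne σ
      have htout : ∀ j, j ∉ s → σ j ≤ t := fun j hj => (hkey i0 hi0 j hj).trans (le_of_eq hti0.symm)
      have step1 : ∑ j, c j * σ j = ∑ j, c j * (σ j - t) + t * ∑ j, c j := by
        rw [Finset.mul_sum, ← Finset.sum_add_distrib]; congr 1; ext j; ring
      have step2 : ∑ j, c j * (σ j - t) ≤ ∑ i ∈ s, (σ i - t) := by
        have h1 : ∑ j, c j * (σ j - t) ≤ ∑ j, (if j ∈ s then σ j - t else 0) := by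
          apply Finset.sum_le_sum
          intro j _
          by_cases hj : j ∈ s
          · simp only [hj, if_pos]
            calc c j * (σ j - t) ≤ 1 * (σ j - t) :=
                  mul_le_mul_of_nonneg_right (hc1 j) (by linarith [hts j hj])
              _ = σ j - t := one_mul _
          · simp only [hj, if_false]
            exact mul_nonpos_of_nonneg_of_nonpos (hc0 j) (by linarith [htout j hj])
        simpa [Finset.sum_ite_mem] using h1
      have step3 : t * ∑ j, c j ≤ t * m := mul_le_mul_of_nonneg_left hcs ht0
      have : ∑ i ∈ s, (σ i - t) = ∑ i ∈ s, σ i - m * t := by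
        rw [Finset.sum_sub_distrib, Finset.sum_const, hsmem, nsmul_eq_mul]
      rw [step1]
      rw [this] at step2
      nlinarith
  exact hfinal.trans (le_sumTop σ m s (by rw [hmin, hsmem]))

section Facts
variable {n : ℕ} (A : Matrix (Fin n) (Fin n) ℂ)

private noncomputable abbrev hherm := (Matrix.posSemidef_conjTranspose_mul_self A).isHermitian

/-- columns of eigenvector unitary of `Aᴴ A` -/
private noncomputable def ev (j : Fin n) : Fin n → ℂ := ⇑((hherm A).eigenvectorBasis j)

lemma fanAux1 (j k : Fin n) :
    ∑ i, (starRingEnd ℂ) (ev A j i) * (ev A k i) = if j = k then 1 else 0 := by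
  have h := (hherm A).eigenvectorBasis.orthonormal
  rw [orthonormal_iff_ite] at h
  simpa [PiLp.inner_apply, RCLike.inner_apply', ev, mul_comm] using h j k

lemma fanAuxSq (j : Fin n) : (singVals A j) ^ 2 = (hherm A).eigenvalues j :=
  Real.sq_sqrt ((Matrix.posSemidef_conjTranspose_mul_self A).eigenvalues_nonneg j)

lemma fanAux2 (j : Fin n) : (Aᴴ * A) *ᵥ ev A j = ((singVals A j) ^ 2 : ℝ) • ev A j := by
  rw [fanAuxSq]; exact (hherm A).mulVec_eigenvectorBasis j

lemma fanAux3 (j k : Fin n) :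
    ∑ i, (starRingEnd ℂ) ((A *ᵥ ev A j) i) * ((A *ᵥ ev A k) i)
      = if j = k then (((singVals A k) ^ 2 : ℝ) : ℂ) else 0 := by
  have h1 : ∑ i, (starRingEnd ℂ) ((A *ᵥ ev A j) i) * ((A *ᵥ ev A k) i)
      = star (A *ᵥ ev A j) ⬝ᵥ (A *ᵥ ev A k) := rfl
  rw [h1, Matrix.star_mulVec, ← Matrix.dotProduct_mulVec, Matrix.mulVec_mulVec, fanAux2,
    dotProduct_smul]
  have h2 : star (ev A j) ⬝ᵥ ev A k = if j = k then 1 else 0 := fanAux1 A j k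
  rw [h2]
  split <;> simp [Complex.real_smul]

lemma fanAux4 (i : Fin n) : A i i = ∑ j, (A *ᵥ ev A j) i * (starRingEnd ℂ) (ev A j i) := by
  have hV : ((hherm A).eigenvectorUnitary : Matrix (Fin n) (Fin n) ℂ)
      * star ((hherm A).eigenvectorUnitary : Matrix (Fin n) (Fin n) ℂ) = 1 :=
    Matrix.mem_unitaryGroup_iff.1 ((hherm A).eigenvectorUnitary).2
  conv_lhs => rw [show A = (A * ((hherm A).eigenvectorUnitary : Matrix (Fin n) (Fin n) ℂ))
      * star ((hherm A).eigenvectorUnitary : Matrix (Fin n) (Fin n) ℂ) by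
    rw [mul_assoc, hV, mul_one]]
  rw [Matrix.mul_apply]
  apply Finset.sum_congr rfl
  intro j _
  simp [Matrix.mul_apply, Matrix.star_apply, Matrix.mulVec, dotProduct, ev,
    Matrix.IsHermitian.eigenvectorUnitary_apply, Complex.star_def]

lemma fanAux5 (i : Fin n) : ∑ j, (‖ev A j i‖) ^ 2 = 1 := by
  have hV : ((hherm A).eigenvectorUnitary : Matrix (Fin n) (Fin n) ℂ)
      * star ((hherm A).eigenvectorUnitary : Matrix (Fin n) (Fin n) ℂ) = 1 :=
    Matrix.mem_unitaryGroup_iff.1 ((hherm A).eigenvectorUnitary).2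
  have h := congrArg (fun M => M i i) hV
  simp only [Matrix.mul_apply, Matrix.star_apply, Matrix.one_apply_eq] at h
  have h2 : (↑(∑ j, (‖ev A j i‖) ^ 2) : ℂ) = 1 := by
    push_cast
    rw [← h]
    apply Finset.sum_congr rfl
    intro j _
    simp [ev, Matrix.IsHermitian.eigenvectorUnitary_apply, Complex.star_def,
      Complex.mul_conj']
  exact_mod_cast h2

lemma fanAux6 (j : Fin n) : ∑ i, (‖ev A j i‖) ^ 2 = 1 := by
  have h := fanAux1 A j j
  simp only [if_true, eq_self_iff_true] at h
  have h2 : (↑(∑ i, (‖ev A j i‖) ^ 2) : ℂ) = 1 := by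
    push_cast
    rw [← h]
    apply Finset.sum_congr rfl
    intro i _
    rw [mul_comm, Complex.mul_conj]
    norm_cast
    exact Complex.sq_norm _
  exact_mod_cast h2

lemma fanAux7 (j : Fin n) :
    ∑ i, (‖(A *ᵥ ev A j) i‖) ^ 2 = (singVals A j) ^ 2 := by
  have h := fanAux3 A j j
  simp only [if_true, eq_self_iff_true] at h
  have h2 : (↑(∑ i, (‖(A *ᵥ ev A j) i‖) ^ 2) : ℂ)
      = (((singVals A j) ^ 2 : ℝ) : ℂ) := by
    rw [← h]
    push_cast
    apply Finset.sum_congr rfl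
    intro i _
    rw [mul_comm, Complex.mul_conj]
    norm_cast
    exact Complex.sq_norm _
  exact_mod_cast h2

lemma fanAux8 (j : Fin n) (hj : singVals A j = 0) (i : Fin n) : (A *ᵥ ev A j) i = 0 := by
  have h : ∑ i, (‖(A *ᵥ ev A j) i‖) ^ 2 = 0 := by
    rw [fanAux7, hj]; norm_num
  have h2 := (Finset.sum_eq_zero_iff_of_nonneg
    (fun i (_ : i ∈ Finset.univ) => sq_nonneg (‖(A *ᵥ ev A j) i‖))).1 h
    i (Finset.mem_univ i)
  have h3 : ‖(A *ᵥ ev A j) i‖ = 0 :=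
    pow_eq_zero_iff (two_ne_zero) |>.1 h2
  exact norm_eq_zero.1 h3

end Facts

section fanAux9
variable {n : ℕ} (A : Matrix (Fin n) (Fin n) ℂ)

private noncomputable def uvec (j : {j : Fin n // singVals A j ≠ 0}) :
    EuclideanSpace ℂ (Fin n) :=
  WithLp.toLp 2 (fun i => ((singVals A j.1 : ℂ))⁻¹ * (A *ᵥ ev A j.1) i)

lemma uvec_orthonormal : Orthonormal ℂ (uvec A) := by
  rw [orthonormal_iff_ite]
  intro j k
  have hin : (inner ℂ (uvec A j) (uvec A k) : ℂ) =
      ((singVals A j.1 : ℂ))⁻¹ * ((singVals A k.1 : ℂ))⁻¹ *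
        (if j.1 = k.1 then (((singVals A k.1) ^ 2 : ℝ) : ℂ) else 0) := by
    rw [PiLp.inner_apply]
    simp only [RCLike.inner_apply', uvec, PiLp.toLp_apply, _root_.map_mul, _root_.map_inv₀, Complex.conj_ofReal]
    rw [← fanAux3 A j.1 k.1, Finset.mul_sum]
    apply Finset.sum_congr rfl
    intro i _
    ring
  rw [hin]
  by_cases h : j = k
  · subst h
    simp only [if_pos rfl]
    have hj : (singVals A j.1 : ℂ) ≠ 0 := Complex.ofReal_ne_zero.2 j.2
    field_simp
    simp
  · have h1 : j.1 ≠ k.1 := fun hh => h (Subtype.ext hh)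
    simp [h1, h]

lemma fanAux9 (i : Fin n) :
    ∑ j, (if singVals A j = 0 then 0
      else ‖(A *ᵥ ev A j) i‖ / singVals A j) ^ 2 ≤ 1 := by
  classical
  have hb := (uvec_orthonormal A).sum_inner_products_le
    (x := EuclideanSpace.single i (1 : ℂ)) (s := Finset.univ)
  rw [EuclideanSpace.norm_single] at hb
  simp only [norm_one, one_pow] at hb
  have hterm : ∀ j : {j : Fin n // singVals A j ≠ 0},
      ‖(inner ℂ (uvec A j) (EuclideanSpace.single i (1 : ℂ)) : ℂ)‖ ^ 2
        = (‖(A *ᵥ ev A j.1) i‖ / singVals A j.1) ^ 2 := by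
    intro j
    have h1 : (inner ℂ (uvec A j) (EuclideanSpace.single i (1 : ℂ)) : ℂ)
        = (starRingEnd ℂ) (uvec A j i) := by
      rw [PiLp.inner_apply]
      simp only [RCLike.inner_apply', EuclideanSpace.single_apply, mul_ite, mul_one, mul_zero]
      rw [Finset.sum_ite_eq' Finset.univ i]
      simp
    rw [h1]
    have hσ : 0 < singVals A j.1 := lt_of_le_of_ne (Real.sqrt_nonneg _) (Ne.symm j.2)
    rw [RCLike.norm_conj]
    show ‖uvec A j i‖ ^ 2 = _
    rw [show uvec A j i = ((singVals A j.1 : ℂ))⁻¹ * (A *ᵥ ev A j.1) i from rfl]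
    rw [norm_mul, norm_inv, Complex.norm_real, Real.norm_of_nonneg hσ.le]
    rw [div_pow, mul_pow, inv_pow]
    ring
  rw [Finset.sum_congr rfl (fun j _ => hterm j)] at hb
  have hconv : ∑ j : Fin n, (if singVals A j = 0 then 0
      else ‖(A *ᵥ ev A j) i‖ / singVals A j) ^ 2
      = ∑ j : {j : Fin n // singVals A j ≠ 0},
          (‖(A *ᵥ ev A j.1) i‖ / singVals A j.1) ^ 2 := by
    rw [Finset.sum_subtype (Finset.univ.filter (fun j => singVals A j ≠ 0))
      (by intro x; simp) (fun j => (‖(A *ᵥ ev A j) i‖ / singVals A j) ^ 2) |>.symm]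
    rw [Finset.sum_filter]
    apply Finset.sum_congr rfl
    intro j _
    by_cases hj : singVals A j = 0 <;> simp [hj]
  rw [hconv]
  exact hb

end fanAux9

lemma diag_sum_le {n m : ℕ} (A : Matrix (Fin n) (Fin n) ℂ) (hm : m ≤ n)
    (s : Finset (Fin n)) (hs : s.card = m) :
    ∑ i ∈ s, ‖A i i‖ ≤ sumTop (singVals A) m := by
  classical
  set σ := singVals A with hσdef
  have hσ0 : ∀ j, 0 ≤ σ j := fun j => Real.sqrt_nonneg _
  set q : Fin n → Fin n → ℝ := fun i j =>
    if σ j = 0 then 0 else ‖(A *ᵥ ev A j) i‖ / σ j with hq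
  set a : Fin n → Fin n → ℝ := fun i j => ‖ev A j i‖ with ha
  have hq0 : ∀ i j, 0 ≤ q i j := by
    intro i j
    by_cases hj : σ j = 0 <;>
      simp [hq, hj, div_nonneg (norm_nonneg _) (hσ0 j)]
  have ha0 : ∀ i j, 0 ≤ a i j := fun i j => norm_nonneg _
  have habs : ∀ i j, ‖(A *ᵥ ev A j) i‖ = σ j * q i j := by
    intro i j
    by_cases hj : σ j = 0
    · simp [hq, hj, fanAux8 A j hj i]
    · simp only [hq, hj, if_false]
      field_simp
  have step1 : ∀ i, ‖A i i‖ ≤ ∑ j, σ j * (q i j * a i j) := by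
    intro i
    calc ‖A i i‖
        ≤ ∑ j, ‖(A *ᵥ ev A j) i * (starRingEnd ℂ) (ev A j i)‖ := by
          rw [fanAux4 A i]; exact norm_sum_le _ _
      _ = ∑ j, σ j * (q i j * a i j) := by
          apply Finset.sum_congr rfl
          intro j _
          rw [norm_mul, Complex.norm_conj, habs i j]
          show σ j * q i j * a i j = _
          ring
  have colq : ∀ j, ∑ i, q i j ^ 2 ≤ 1 := by
    intro j
    by_cases hj : σ j = 0
    · simp [hq, hj]
    · have h1 : ∑ i, q i j ^ 2
          = (∑ i, ‖(A *ᵥ ev A j) i‖ ^ 2) / σ j ^ 2 := by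
        simp [hq, hj, div_pow, Finset.sum_div]
      rw [h1, fanAux7]
      rw [div_self (pow_ne_zero 2 hj)]
  set c : Fin n → ℝ := fun j => ∑ i ∈ s, q i j * a i j with hc
  have hc0 : ∀ j, 0 ≤ c j :=
    fun j => Finset.sum_nonneg fun i _ => mul_nonneg (hq0 i j) (ha0 i j)
  have hc1 : ∀ j, c j ≤ 1 := by
    intro j
    have h2 : c j ^ 2 ≤ 1 := by
      calc c j ^ 2 ≤ (∑ i ∈ s, q i j ^ 2) * (∑ i ∈ s, a i j ^ 2) :=
            Finset.sum_mul_sq_le_sq_mul_sq s _ _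
        _ ≤ 1 * 1 := by
            apply mul_le_mul _ _ (Finset.sum_nonneg fun i _ => sq_nonneg _) zero_le_one
            · exact le_trans (Finset.sum_le_sum_of_subset_of_nonneg (Finset.subset_univ s)
                (fun i _ _ => sq_nonneg _)) (colq j)
            · exact le_trans (Finset.sum_le_sum_of_subset_of_nonneg (Finset.subset_univ s)
                (fun i _ _ => sq_nonneg _)) (le_of_eq (fanAux6 A j))
        _ = 1 := one_mul 1
    nlinarith [hc0 j]
  have hcs : ∑ j, c j ≤ (m : ℝ) := by
    have hrow : ∀ i ∈ s, ∑ j, q i j * a i j ≤ 1 := by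
      intro i _
      have h2 : (∑ j, q i j * a i j) ^ 2 ≤ 1 := by
        calc (∑ j, q i j * a i j) ^ 2
            ≤ (∑ j, q i j ^ 2) * (∑ j, a i j ^ 2) :=
              Finset.sum_mul_sq_le_sq_mul_sq Finset.univ _ _
          _ ≤ 1 * 1 := by
              apply mul_le_mul (fanAux9 A i) (le_of_eq (fanAux5 A i))
                (Finset.sum_nonneg fun j _ => sq_nonneg _) zero_le_one
          _ = 1 := one_mul 1
      nlinarith [Finset.sum_nonneg (fun j (_ : j ∈ Finset.univ) =>
        mul_nonneg (hq0 i j) (ha0 i j))]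
    calc ∑ j, c j = ∑ i ∈ s, ∑ j, q i j * a i j := Finset.sum_comm
      _ ≤ ∑ _i ∈ s, (1 : ℝ) := Finset.sum_le_sum hrow
      _ = m := by simp [hs]
  calc ∑ i ∈ s, ‖A i i‖ ≤ ∑ i ∈ s, ∑ j, σ j * (q i j * a i j) :=
        Finset.sum_le_sum fun i _ => step1 i
    _ = ∑ j, c j * σ j := by
        rw [Finset.sum_comm]
        apply Finset.sum_congr rfl
        intro j _
        rw [hc, Finset.sum_mul]
        apply Finset.sum_congr rfl
        intro i _
        ring
    _ ≤ sumTop σ m := sum_mul_le_sumTop hm σ c hσ0 hc0 hc1 hcs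


/-- Fan's theorem for finite matrices: for every `m ≤ n`, the sum of the `m` largest absolute
values of diagonal entries of `A` is at most the sum of the `m` largest singular values of `A`. -/
theorem stmt_9 {n : ℕ} (A : Matrix (Fin n) (Fin n) ℂ) :
    ∀ m : ℕ, m ≤ n → sumTop (fun i => ‖A i i‖) m ≤ sumTop (singVals A) m := by
  intro m hm
  apply sumTop_le
  intro s hscard
  exact diag_sum_le A hm s (by rw [hscard]; exact min_eq_left hm)
end

section
/- Equality case of the pinching theorem for finite matrices: with A and its pinching B as above, if the singular values of B coincide (with multiplicity) with those of A, then B = A. -/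
open scoped ComplexOrder

/-- The pinching of `A` relative to the partition given by the block assignment `blk`. -/
def pinch {N : ℕ} {α : Type*} [DecidableEq α] (A : Matrix (Fin N) (Fin N) ℂ) (blk : Fin N → α) :
    Matrix (Fin N) (Fin N) ℂ :=
  fun i j => if blk i = blk j then A i j else 0

/-- Trace of a Hermitian matrix is the sum of its eigenvalues. -/
lemma trace_eq_sum_eigs {N : ℕ} {A : Matrix (Fin N) (Fin N) ℂ} (hA : A.IsHermitian) :
    A.trace = ∑ i, (hA.eigenvalues i : ℂ) := by
  conv_lhs => rw [hA.spectral_theorem]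
  rw [Unitary.conjStarAlgAut_apply, Matrix.trace_mul_cycle, Matrix.UnitaryGroup.star_mul_self, Matrix.one_mul,
    Matrix.trace_diagonal]
  simp

/-- Sum of squared singular values equals the squared Frobenius norm. -/
lemma sum_singVals_sq {N : ℕ} (A : Matrix (Fin N) (Fin N) ℂ) :
    ∑ i, (singVals A i) ^ 2 = ∑ i, ∑ j, Complex.normSq (A i j) := by
  have hps := Matrix.posSemidef_conjTranspose_mul_self A
  have h1 : ∀ i, (singVals A i) ^ 2 = hps.isHermitian.eigenvalues i := fun i =>
    Real.sq_sqrt (hps.eigenvalues_nonneg i)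
  have h2 : ((∑ i, (singVals A i) ^ 2 : ℝ) : ℂ) = (Matrix.conjTranspose A * A).trace := by
    rw [trace_eq_sum_eigs hps.isHermitian]
    push_cast
    exact Finset.sum_congr rfl fun i _ => by rw [← Complex.ofReal_pow, h1]
  have h3 : (Matrix.conjTranspose A * A).trace = ((∑ i, ∑ j, Complex.normSq (A i j) : ℝ) : ℂ) := by
    rw [Matrix.trace]
    push_cast
    rw [Finset.sum_comm]
    simp [Matrix.diag_apply, Matrix.mul_apply, Matrix.conjTranspose_apply,
      Complex.normSq_eq_conj_mul_self, Complex.star_def]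
  exact_mod_cast h2.trans h3

/-- Equality case of the pinching theorem: if the singular values of the pinching `B` of `A`
coincide with those of `A` counted with multiplicity, then `B = A`. -/
theorem stmt_11 {N : ℕ} {α : Type*} [DecidableEq α] (A : Matrix (Fin N) (Fin N) ℂ)
    (blk : Fin N → α)
    (h : Multiset.map (singVals (pinch A blk)) Finset.univ.val =
      Multiset.map (singVals A) Finset.univ.val) :
    pinch A blk = A := by
  set B := pinch A blk with hB
  have hsum : ∑ i, (singVals B i) ^ 2 = ∑ i, (singVals A i) ^ 2 := by
    have := congrArg (fun m => (Multiset.map (fun x : ℝ => x ^ 2) m).sum) h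
    simpa [Multiset.map_map, Finset.sum, Function.comp_def] using this
  rw [sum_singVals_sq, sum_singVals_sq] at hsum
  have hle : ∀ p ∈ (Finset.univ : Finset (Fin N × Fin N)),
      Complex.normSq (B p.1 p.2) ≤ Complex.normSq (A p.1 p.2) := by
    rintro ⟨i, j⟩ _
    simp only [hB, pinch]
    split <;> simp [Complex.normSq_nonneg]
  have hsum' : ∑ p : Fin N × Fin N, Complex.normSq (B p.1 p.2)
      = ∑ p : Fin N × Fin N, Complex.normSq (A p.1 p.2) := by
    rw [Fintype.sum_prod_type, Fintype.sum_prod_type]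
    exact hsum
  have key := (Finset.sum_eq_sum_iff_of_le hle).mp hsum'
  funext i j
  have hij := key (i, j) (Finset.mem_univ _)
  by_cases hb : blk i = blk j
  · simp [hB, pinch, hb]
  · have h0 : Complex.normSq (A i j) = 0 := by simpa [hB, pinch, hb] using hij.symm
    simp [hB, pinch, hb, Complex.normSq_eq_zero.mp h0]
end

section
/- For a finite N×N matrix A, a partition of indices, and the generalized diagonal D = ∑_n Q_n A P_{n+k} formed from the block projections shifted by k, the singular values of D are submajorized by those of A. -/
open scoped ComplexOrder

/-- The diagonal 0-1 projection matrix picking out the indices in block `n` of the partition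
of `Fin N` encoded by the block-assignment map `p : Fin N → ℤ`. -/
def blockProj {N : ℕ} (p : Fin N → ℤ) (n : ℤ) : Matrix (Fin N) (Fin N) ℂ :=
  Matrix.diagonal fun i => if p i = n then 1 else 0


open Matrix Finset

namespace GenDiag

noncomputable def sumTop' {N : ℕ} (f : Fin N → ℝ) (m : ℕ) : ℝ :=
  sSup {x | ∃ s : Finset (Fin N), s.card = min m N ∧ x = ∑ i ∈ s, f i}

lemma sumTop_set_eq {N : ℕ} (f : Fin N → ℝ) (m : ℕ) :
    {x | ∃ s : Finset (Fin N), s.card = min m N ∧ x = ∑ i ∈ s, f i} =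
      ↑(((Finset.univ : Finset (Fin N)).powersetCard (min m N)).image
        (fun s => ∑ i ∈ s, f i)) := by
  ext x
  simp only [Set.mem_setOf_eq, Finset.coe_image, Set.mem_image, Finset.mem_coe,
    Finset.mem_powersetCard_univ]
  constructor
  · rintro ⟨s, hc, rfl⟩; exact ⟨s, hc, rfl⟩
  · rintro ⟨s, hc, rfl⟩; exact ⟨s, hc, rfl⟩

lemma powersetCard_nonempty {N : ℕ} (m : ℕ) :
    (((Finset.univ : Finset (Fin N)).powersetCard (min m N))).Nonempty := by
  obtain ⟨B, -, hB⟩ := Finset.exists_subset_card_eq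
    (show min m N ≤ (Finset.univ : Finset (Fin N)).card by simp [min_le_right])
  exact ⟨B, Finset.mem_powersetCard_univ.2 hB⟩

lemma sum_le_sumTop {N : ℕ} (f : Fin N → ℝ) (m : ℕ) (s : Finset (Fin N))
    (hcard : s.card = min m N) : ∑ i ∈ s, f i ≤ sumTop' f m := by
  rw [sumTop', sumTop_set_eq]
  have hne : ((((Finset.univ : Finset (Fin N)).powersetCard (min m N))).image
      (fun s => ∑ i ∈ s, f i)).Nonempty := (powersetCard_nonempty m).image _
  exact le_csSup (Finset.bddAbove _)
    (by exact_mod_cast Finset.mem_image.2 ⟨s, Finset.mem_powersetCard_univ.2 hcard, rfl⟩)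

lemma sumTop_exists_eq {N : ℕ} (f : Fin N → ℝ) (m : ℕ) :
    ∃ s : Finset (Fin N), s.card = min m N ∧ sumTop' f m = ∑ i ∈ s, f i := by
  rw [sumTop', sumTop_set_eq]
  have hne : ((((Finset.univ : Finset (Fin N)).powersetCard (min m N))).image
      (fun s => ∑ i ∈ s, f i)).Nonempty := (powersetCard_nonempty m).image _
  have hmem := hne.csSup_mem
  rw [Finset.mem_image] at hmem
  obtain ⟨s, hs, h⟩ := hmem
  exact ⟨s, Finset.mem_powersetCard_univ.1 hs, h.symm⟩

/-- Key majorization lemma: if `0 ≤ d i ≤ 1` and `∑ d ≤ min m N` then `∑ f i * d i` is at most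
the sum of the `min m N` largest values of the nonnegative function `f`. -/
lemma sum_mul_le_sumTop {N : ℕ} (f : Fin N → ℝ) (hf : ∀ i, 0 ≤ f i) (m : ℕ)
    (d : Fin N → ℝ) (hd0 : ∀ i, 0 ≤ d i) (hd1 : ∀ i, d i ≤ 1)
    (hsum : ∑ i, d i ≤ ((min m N : ℕ) : ℝ)) :
    ∑ i, f i * d i ≤ sumTop' f m := by
  -- choose a maximizing subset s of cardinality min m N
  obtain ⟨s, hsmem, hsmax⟩ := Finset.exists_max_image
    (((Finset.univ : Finset (Fin N)).powersetCard (min m N))) (fun s => ∑ i ∈ s, f i)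
    (powersetCard_nonempty m)
  have hscard : s.card = min m N := Finset.mem_powersetCard_univ.1 hsmem
  have hkey : ∀ j ∉ s, ∀ i ∈ s, f j ≤ f i := by
    intro j hj i hi
    have hins : (insert j (s.erase i)).card = min m N := by
      rw [Finset.card_insert_of_notMem (fun h => hj (Finset.mem_of_mem_erase h)),
        Finset.card_erase_of_mem hi, hscard]
      have : 1 ≤ min m N := by
        rw [← hscard]; exact Finset.card_pos.2 ⟨i, hi⟩
      omega
    have hle := hsmax _ (Finset.mem_powersetCard_univ.2 hins)
    rw [Finset.sum_insert (fun h => hj (Finset.mem_of_mem_erase h))] at hle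
    have herase : ∑ x ∈ s.erase i, f x = ∑ x ∈ s, f x - f i := by
      rw [← Finset.sum_erase_add s f hi]; ring
    rw [herase] at hle; linarith
  -- it suffices to bound by ∑_{i ∈ s} f i
  refine le_trans ?_ (sum_le_sumTop f m s hscard)
  rcases Finset.eq_empty_or_nonempty s with rfl | hne
  · -- min m N = 0, so all d i = 0
    simp only [Finset.card_empty] at hscard
    have : ∑ i, d i = 0 := le_antisymm (by rw [← hscard] at hsum; exact_mod_cast hsum)
      (Finset.sum_nonneg fun i _ => hd0 i)
    have hall : ∀ i ∈ Finset.univ, d i = 0 :=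
      (Finset.sum_eq_zero_iff_of_nonneg (fun i _ => hd0 i)).1 this
    simp only [Finset.sum_empty]
    calc ∑ i, f i * d i = 0 := by
          apply Finset.sum_eq_zero; intro i hi; rw [hall i hi, mul_zero]
      _ ≤ 0 := le_refl 0
  · obtain ⟨i0, hi0, hmin⟩ := Finset.exists_min_image s f hne
    set t := f i0 with ht
    have ht0 : 0 ≤ t := hf i0
    have hsplit : ∑ i, f i * d i = ∑ i ∈ s, f i * d i + ∑ i ∈ sᶜ, f i * d i :=
      (Finset.sum_add_sum_compl s _).symm
    have hdsplit : ∑ i, d i = ∑ i ∈ s, d i + ∑ i ∈ sᶜ, d i :=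
      (Finset.sum_add_sum_compl s _).symm
    have hcompl : ∑ i ∈ sᶜ, f i * d i ≤ t * ∑ i ∈ sᶜ, d i := by
      rw [Finset.mul_sum]
      apply Finset.sum_le_sum
      intro j hj
      exact mul_le_mul_of_nonneg_right
        (hkey j (by simpa using hj) i0 hi0) (hd0 j)
    have hcompld : ∑ i ∈ sᶜ, d i ≤ ∑ i ∈ s, (1 - d i) := by
      have : ∑ i ∈ s, (1 - d i) = ((min m N : ℕ) : ℝ) - ∑ i ∈ s, d i := by
        rw [Finset.sum_sub_distrib, Finset.sum_const, hscard]; simp [nsmul_eq_mul]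
      rw [this]; linarith [hdsplit ▸ hsum]
    have h2 : t * ∑ i ∈ sᶜ, d i ≤ ∑ i ∈ s, f i * (1 - d i) := by
      calc t * ∑ i ∈ sᶜ, d i ≤ t * ∑ i ∈ s, (1 - d i) :=
            mul_le_mul_of_nonneg_left hcompld ht0
        _ = ∑ i ∈ s, t * (1 - d i) := Finset.mul_sum _ _ _
        _ ≤ ∑ i ∈ s, f i * (1 - d i) := by
            apply Finset.sum_le_sum
            intro i hi
            exact mul_le_mul_of_nonneg_right (hmin i hi) (by linarith [hd1 i])
    have : ∑ i ∈ s, f i * d i + ∑ i ∈ s, f i * (1 - d i) = ∑ i ∈ s, f i := by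
      rw [← Finset.sum_add_distrib]; apply Finset.sum_congr rfl; intro i _; ring
    linarith


local notation "⟪" x ", " y "⟫" => @inner ℂ _ _ x y

variable {N : ℕ}

noncomputable def mvL (X : Matrix (Fin N) (Fin N) ℂ) :
    EuclideanSpace ℂ (Fin N) →ₗ[ℂ] EuclideanSpace ℂ (Fin N) :=
  (WithLp.linearEquiv 2 ℂ (Fin N → ℂ)).symm.toLinearMap ∘ₗ X.mulVecLin ∘ₗ
    (WithLp.linearEquiv 2 ℂ (Fin N → ℂ)).toLinearMap

lemma mvL_apply (X : Matrix (Fin N) (Fin N) ℂ) (x : EuclideanSpace ℂ (Fin N)) (i : Fin N) :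
    mvL X x i = ∑ j, X i j * x j := by
  simp [mvL, Matrix.mulVecLin, Matrix.mulVec, dotProduct, WithLp.linearEquiv]

lemma inner_eq (x y : EuclideanSpace ℂ (Fin N)) :
    ⟪x, y⟫ = ∑ i, (starRingEnd ℂ) (x i) * y i := by
  simp [PiLp.inner_apply, RCLike.inner_apply]
  exact Finset.sum_congr rfl fun _ _ => mul_comm _ _

lemma inner_mvL (X : Matrix (Fin N) (Fin N) ℂ) (x y : EuclideanSpace ℂ (Fin N)) :
    ⟪x, mvL X y⟫ = ⟪mvL Xᴴ x, y⟫ := by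
  simp only [inner_eq, mvL_apply, Matrix.conjTranspose_apply, map_sum,
    Finset.mul_sum, Finset.sum_mul]
  rw [Finset.sum_comm]
  apply Finset.sum_congr rfl; intro i _; apply Finset.sum_congr rfl; intro j _
  simp only [_root_.map_mul, Complex.star_def, Complex.conj_conj]
  ring

lemma inner_mvL' (X : Matrix (Fin N) (Fin N) ℂ) (x y : EuclideanSpace ℂ (Fin N)) :
    ⟪mvL X x, y⟫ = ⟪x, mvL Xᴴ y⟫ := by
  rw [inner_mvL, Matrix.conjTranspose_conjTranspose]

lemma mvL_mvL (X Y : Matrix (Fin N) (Fin N) ℂ) (x : EuclideanSpace ℂ (Fin N)) :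
    mvL X (mvL Y x) = mvL (X * Y) x := by
  simp [mvL, Matrix.mulVecLin_mul]

lemma mvL_one (x : EuclideanSpace ℂ (Fin N)) : mvL 1 x = x := by
  simp [mvL]

-- the PSD spectral data of Xᴴ * X
noncomputable def herm (X : Matrix (Fin N) (Fin N) ℂ) : (Xᴴ * X).IsHermitian :=
  (Matrix.posSemidef_conjTranspose_mul_self X).isHermitian

noncomputable def eb (X : Matrix (Fin N) (Fin N) ℂ) :
    OrthonormalBasis (Fin N) ℂ (EuclideanSpace ℂ (Fin N)) := (herm X).eigenvectorBasis

noncomputable def lam (X : Matrix (Fin N) (Fin N) ℂ) : Fin N → ℝ := (herm X).eigenvalues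

lemma lam_nonneg (X : Matrix (Fin N) (Fin N) ℂ) (i : Fin N) : 0 ≤ lam X i :=
  (Matrix.posSemidef_conjTranspose_mul_self X).eigenvalues_nonneg i

lemma singVals_eq (X : Matrix (Fin N) (Fin N) ℂ) :
    (fun i => Real.sqrt ((Matrix.posSemidef_conjTranspose_mul_self X).isHermitian.eigenvalues i))
      = fun i => Real.sqrt (lam X i) := rfl

lemma mvL_hermX (X : Matrix (Fin N) (Fin N) ℂ) (j : Fin N) :
    mvL (Xᴴ * X) (eb X j) = ((lam X j : ℝ) : ℂ) • eb X j := by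
  have h := (herm X).mulVec_eigenvectorBasis j
  rw [RCLike.real_smul_eq_coe_smul (K := ℂ)] at h
  ext i
  have h2 := congrFun h i
  simpa [mvL_apply, Matrix.mulVec, dotProduct, eb, lam,
    PiLp.smul_apply, smul_eq_mul] using h2

lemma inner_mvL_eb (X : Matrix (Fin N) (Fin N) ℂ) (i j : Fin N) :
    ⟪mvL X (eb X i), mvL X (eb X j)⟫ = if i = j then ((lam X j : ℝ) : ℂ) else 0 := by
  rw [inner_mvL', mvL_mvL, mvL_hermX, inner_smul_right]
  rw [orthonormal_iff_ite.1 (eb X).orthonormal i j]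
  by_cases h : i = j <;> simp [h]

noncomputable def wv (X : Matrix (Fin N) (Fin N) ℂ) (i : Fin N) : EuclideanSpace ℂ (Fin N) :=
  if lam X i = 0 then 0 else ((Real.sqrt (lam X i) : ℝ) : ℂ)⁻¹ • mvL X (eb X i)

lemma sqrt_lam_sq (X : Matrix (Fin N) (Fin N) ℂ) (i : Fin N) :
    Real.sqrt (lam X i) * Real.sqrt (lam X i) = lam X i :=
  Real.mul_self_sqrt (lam_nonneg X i)

lemma mvL_eb_eq (X : Matrix (Fin N) (Fin N) ℂ) (i : Fin N) :
    mvL X (eb X i) = ((Real.sqrt (lam X i) : ℝ) : ℂ) • wv X i := by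
  rw [wv]
  by_cases h : lam X i = 0
  · simp only [h, if_true, smul_zero]
    have : ⟪mvL X (eb X i), mvL X (eb X i)⟫ = 0 := by
      rw [inner_mvL_eb]; simp [h]
    exact inner_self_eq_zero.1 this
  · rw [if_neg h, smul_inv_smul₀]
    simp only [ne_eq, Complex.ofReal_eq_zero]
    exact Real.sqrt_ne_zero'.2 (lt_of_le_of_ne (lam_nonneg X i) (Ne.symm h))

lemma inner_wv (X : Matrix (Fin N) (Fin N) ℂ) (i j : Fin N) :
    ⟪wv X i, wv X j⟫ = if i = j ∧ lam X i ≠ 0 then 1 else 0 := by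
  rw [wv, wv]
  by_cases hi : lam X i = 0
  · simp [hi]
  by_cases hj : lam X j = 0
  · have hij : i ≠ j := fun h => hi (h ▸ hj)
    simp [hj, hi, hij]
  rw [if_neg hi, if_neg hj, inner_smul_left, inner_smul_right, inner_mvL_eb]
  by_cases hij : i = j
  · subst hij
    rw [if_pos rfl, if_pos ⟨rfl, hi⟩]
    rw [map_inv₀, Complex.conj_ofReal]
    have hl : ((lam X i : ℝ) : ℂ) ≠ 0 := by
      simpa [Complex.ofReal_eq_zero] using hi
    rw [← mul_assoc, ← mul_inv, ← Complex.ofReal_mul, sqrt_lam_sq, inv_mul_cancel₀ hl]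
  · rw [if_neg hij, if_neg (by tauto)]
    simp

lemma inner_wv_ne (X : Matrix (Fin N) (Fin N) ℂ) {i j : Fin N} (h : i ≠ j) :
    ⟪wv X i, wv X j⟫ = 0 := by rw [inner_wv, if_neg (by tauto)]

lemma norm_wv_sq (X : Matrix (Fin N) (Fin N) ℂ) (i : Fin N) :
    ‖wv X i‖ ^ 2 = if lam X i = 0 then 0 else 1 := by
  have h : RCLike.re ⟪wv X i, wv X i⟫ = ‖wv X i‖ ^ 2 := inner_self_eq_norm_sq _
  rw [inner_wv X i i] at h
  by_cases hc : lam X i = 0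
  · rw [if_pos hc]
    rw [if_neg (by simp [hc])] at h
    simpa using h.symm
  · rw [if_neg hc]
    rw [if_pos ⟨rfl, hc⟩] at h
    simpa using h.symm

lemma norm_wv_le (X : Matrix (Fin N) (Fin N) ℂ) (i : Fin N) : ‖wv X i‖ ≤ 1 := by
  have h3 : ‖wv X i‖ ^ 2 ≤ 1 := by rw [norm_wv_sq]; split <;> norm_num
  nlinarith [norm_nonneg (wv X i)]


lemma inner_eq' {K : Type*} [Fintype K] (x y : EuclideanSpace ℂ K) :
    ⟪x, y⟫ = ∑ i, (starRingEnd ℂ) (x i) * y i := by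
  simp [PiLp.inner_apply, RCLike.inner_apply]
  exact Finset.sum_congr rfl fun _ _ => mul_comm _ _

lemma semiBessel {ι : Type*} [Fintype ι] (u : ι → EuclideanSpace ℂ (Fin N))
    (ho : ∀ s t, s ≠ t → ⟪u s, u t⟫ = 0) (hn : ∀ t, ‖u t‖ ≤ 1)
    (x : EuclideanSpace ℂ (Fin N)) :
    ∑ t, ‖⟪u t, x⟫‖ ^ 2 ≤ ‖x‖ ^ 2 := by
  classical
  haveI hFin : Fintype {t // u t ≠ 0} := Subtype.fintype _
  set v : {t // u t ≠ 0} → EuclideanSpace ℂ (Fin N) := fun t => (‖u t.1‖ : ℂ)⁻¹ • u t.1 with hv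
  have hne : ∀ t : {t // u t ≠ 0}, (‖u t.1‖ : ℂ) ≠ 0 := by
    intro t; simpa [Complex.ofReal_eq_zero, norm_eq_zero] using t.2
  have hvon : Orthonormal ℂ v := by
    rw [orthonormal_iff_ite]
    intro i j
    by_cases hij : i = j
    · subst hij
      rw [if_pos rfl, hv]
      simp only [inner_smul_left, inner_smul_right, map_inv₀, Complex.conj_ofReal]
      rw [inner_self_eq_norm_sq_to_K]
      rw [sq, ← mul_assoc, ← mul_inv]
      exact inv_mul_cancel₀ (mul_ne_zero (hne i) (hne i))
    · have h1 : i.1 ≠ j.1 := fun h => hij (Subtype.ext h)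
      rw [if_neg hij, hv]
      simp [inner_smul_left, inner_smul_right, ho _ _ h1]
  have bes := hvon.sum_inner_products_le x (s := Finset.univ)
  have hstep : ∑ t, ‖⟪u t, x⟫‖ ^ 2
      = ∑ t ∈ Finset.univ.filter (fun t => u t ≠ 0), ‖⟪u t, x⟫‖ ^ 2 := by
    refine (Finset.sum_filter_of_ne (fun t _ h => ?_)).symm
    intro h0; apply h; rw [h0]; simp
  have hsub := Finset.sum_subtype (p := fun t => u t ≠ 0) (F := hFin)
    (Finset.univ.filter fun t => u t ≠ 0) (by simp) (fun t => ‖⟪u t, x⟫‖ ^ 2)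
  rw [hstep, hsub]
  refine le_trans (Finset.sum_le_sum fun t _ => ?_) bes
  have hu : u t.1 = (‖u t.1‖ : ℂ) • v t := by
    rw [hv]; rw [smul_smul, mul_inv_cancel₀ (hne t), one_smul]
  have hsq : ‖u t.1‖ ^ 2 ≤ 1 := by nlinarith [hn t.1, norm_nonneg (u t.1)]
  calc ‖⟪u t.1, x⟫‖ ^ 2 = ‖u t.1‖ ^ 2 * ‖⟪v t, x⟫‖ ^ 2 := by
        conv_lhs => rw [hu]
        rw [inner_smul_left, Complex.conj_ofReal, norm_mul, Complex.norm_real, norm_norm,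
          mul_pow]
    _ ≤ 1 * ‖⟪v t, x⟫‖ ^ 2 :=
        mul_le_mul_of_nonneg_right hsq (sq_nonneg _)
    _ = ‖⟪v t, x⟫‖ ^ 2 := one_mul _

lemma keyUB (X : Matrix (Fin N) (Fin N) ℂ) (m : ℕ)
    (u v : Fin (min m N) → EuclideanSpace ℂ (Fin N))
    (hou : ∀ s t, s ≠ t → ⟪u s, u t⟫ = 0) (hnu : ∀ t, ‖u t‖ ≤ 1)
    (hov : ∀ s t, s ≠ t → ⟪v s, v t⟫ = 0) (hnv : ∀ t, ‖v t‖ ≤ 1) :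
    ∑ t, (⟪u t, mvL X (v t)⟫).re ≤ sumTop' (fun i => Real.sqrt (lam X i)) m := by
  classical
  set σ : Fin N → ℝ := fun i => Real.sqrt (lam X i) with hσdef
  have hσ : ∀ i, 0 ≤ σ i := fun i => Real.sqrt_nonneg _
  have hexp : ∀ t, ⟪u t, mvL X (v t)⟫
      = ∑ i, (σ i : ℂ) * (⟪eb X i, v t⟫ * ⟪u t, wv X i⟫) := by
    intro t
    conv_lhs => rw [← (eb X).sum_repr' (v t)]
    rw [map_sum, inner_sum]
    apply Finset.sum_congr rfl
    intro i _
    rw [LinearMap.map_smul, inner_smul_right, mvL_eb_eq, inner_smul_right]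
    ring
  set c : Fin N → ℝ := fun i => (∑ t, ⟪eb X i, v t⟫ * ⟪u t, wv X i⟫).re with hcdef
  have hLHS : ∑ t, (⟪u t, mvL X (v t)⟫).re = ∑ i, σ i * c i := by
    calc ∑ t, (⟪u t, mvL X (v t)⟫).re
        = (∑ t, ⟪u t, mvL X (v t)⟫).re := (Complex.re_sum _ _).symm
      _ = (∑ i, (σ i : ℂ) * ∑ t, ⟪eb X i, v t⟫ * ⟪u t, wv X i⟫).re := by
          rw [Finset.sum_congr rfl (fun t _ => hexp t), Finset.sum_comm]
          congr 1
          exact Finset.sum_congr rfl fun i _ => (Finset.mul_sum _ _ _).symm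
      _ = ∑ i, σ i * c i := by
          rw [Complex.re_sum]
          exact Finset.sum_congr rfl fun i _ => by
            simp [Complex.mul_re, hcdef]
  set α : Fin N → ℝ := fun i => ∑ t, ‖⟪u t, wv X i⟫‖ ^ 2 with hαdef
  set β : Fin N → ℝ := fun i => ∑ t, ‖⟪eb X i, v t⟫‖ ^ 2 with hβdef
  have hα0 : ∀ i, 0 ≤ α i := fun i => Finset.sum_nonneg fun t _ => sq_nonneg _
  have hβ0 : ∀ i, 0 ≤ β i := fun i => Finset.sum_nonneg fun t _ => sq_nonneg _
  have hα1 : ∀ i, α i ≤ 1 := by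
    intro i
    have h1 := semiBessel u hou hnu (wv X i)
    have h2 : ‖wv X i‖ ^ 2 ≤ 1 := by rw [norm_wv_sq]; split <;> norm_num
    exact le_trans h1 h2
  have hβ1 : ∀ i, β i ≤ 1 := by
    intro i
    have h1 := semiBessel v hov hnv (eb X i)
    have heq : β i = ∑ t, ‖⟪v t, eb X i⟫‖ ^ 2 :=
      Finset.sum_congr rfl fun t _ => by rw [norm_inner_symm]
    have h2 : ‖eb X i‖ ^ 2 ≤ 1 := by rw [(eb X).orthonormal.1 i]; norm_num
    rw [heq]; exact le_trans h1 h2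
  have hαsum : ∑ i, α i ≤ ((min m N : ℕ) : ℝ) := by
    rw [hαdef]
    rw [Finset.sum_comm]
    calc ∑ t, ∑ i, ‖⟪u t, wv X i⟫‖ ^ 2 ≤ ∑ t : Fin (min m N), (1 : ℝ) := by
          apply Finset.sum_le_sum
          intro t _
          have heq : ∑ i, ‖⟪u t, wv X i⟫‖ ^ 2 = ∑ i, ‖⟪wv X i, u t⟫‖ ^ 2 :=
            Finset.sum_congr rfl fun i _ => by rw [norm_inner_symm]
          rw [heq]
          refine le_trans (semiBessel (wv X) (fun a b hab => inner_wv_ne X hab)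
            (norm_wv_le X) (u t)) ?_
          have := hnu t
          nlinarith [norm_nonneg (u t)]
      _ = ((min m N : ℕ) : ℝ) := by simp
  have hβsum : ∑ i, β i ≤ ((min m N : ℕ) : ℝ) := by
    rw [hβdef]
    rw [Finset.sum_comm]
    calc ∑ t, ∑ i, ‖⟪eb X i, v t⟫‖ ^ 2 ≤ ∑ t : Fin (min m N), (1 : ℝ) := by
          apply Finset.sum_le_sum
          intro t _
          refine le_trans ((eb X).orthonormal.sum_inner_products_le (v t)) ?_
          have := hnv t
          nlinarith [norm_nonneg (v t)]
      _ = ((min m N : ℕ) : ℝ) := by simp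
  have hCS : ∀ i, c i ≤ Real.sqrt (β i) * Real.sqrt (α i) := by
    intro i
    set a : EuclideanSpace ℂ (Fin (min m N)) := WithLp.toLp 2 fun t => (starRingEnd ℂ) ⟪eb X i, v t⟫ with hadef
    set b : EuclideanSpace ℂ (Fin (min m N)) := WithLp.toLp 2 fun t => ⟪u t, wv X i⟫ with hbdef
    have hab : ⟪a, b⟫ = ∑ t, ⟪eb X i, v t⟫ * ⟪u t, wv X i⟫ := by
      rw [inner_eq']
      exact Finset.sum_congr rfl fun t _ => by simp [hadef, hbdef]
    have hcs := norm_inner_le_norm (𝕜 := ℂ) a b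
    have hna : ‖a‖ = Real.sqrt (β i) := by
      rw [EuclideanSpace.norm_eq]
      congr 1
      refine Finset.sum_congr rfl fun t _ => ?_
      rw [hadef]
      rw [PiLp.toLp_apply, RCLike.norm_conj]
    have hnb : ‖b‖ = Real.sqrt (α i) := by
      rw [EuclideanSpace.norm_eq]
    rw [hab, hna, hnb] at hcs
    calc c i ≤ ‖∑ t, ⟪eb X i, v t⟫ * ⟪u t, wv X i⟫‖ := by
          rw [hcdef]
          exact Complex.re_le_norm _
      _ ≤ Real.sqrt (β i) * Real.sqrt (α i) := hcs
  have hc1 : ∀ i, c i ≤ 1 := by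
    intro i
    refine le_trans (hCS i) ?_
    have h1 : Real.sqrt (β i) ≤ 1 := Real.sqrt_le_one.mpr (hβ1 i)
    have h2 : Real.sqrt (α i) ≤ 1 := Real.sqrt_le_one.mpr (hα1 i)
    nlinarith [Real.sqrt_nonneg (β i), Real.sqrt_nonneg (α i)]
  set d : Fin N → ℝ := fun i => min 1 (max 0 (c i)) with hddef
  have hcd : ∀ i, c i ≤ d i := fun i => le_min (hc1 i) (le_max_right _ _)
  have hd0 : ∀ i, 0 ≤ d i := fun i => le_min (by norm_num) (le_max_left _ _)
  have hd1 : ∀ i, d i ≤ 1 := fun i => min_le_left _ _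
  have hdab : ∀ i, d i ≤ (α i + β i) / 2 := by
    intro i
    have h1 : d i ≤ max 0 (c i) := min_le_right _ _
    have h2 : max 0 (c i) ≤ Real.sqrt (β i) * Real.sqrt (α i) :=
      max_le (mul_nonneg (Real.sqrt_nonneg _) (Real.sqrt_nonneg _)) (hCS i)
    have h3 : Real.sqrt (β i) * Real.sqrt (α i) ≤ (α i + β i) / 2 := by
      nlinarith [Real.sq_sqrt (hα0 i), Real.sq_sqrt (hβ0 i), Real.sqrt_nonneg (α i),
        Real.sqrt_nonneg (β i), sq_nonneg (Real.sqrt (α i) - Real.sqrt (β i))]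
    linarith
  have hdsum : ∑ i, d i ≤ ((min m N : ℕ) : ℝ) := by
    calc ∑ i, d i ≤ ∑ i, (α i + β i) / 2 := Finset.sum_le_sum fun i _ => hdab i
      _ = (∑ i, α i + ∑ i, β i) / 2 := by rw [← Finset.sum_add_distrib, Finset.sum_div]
      _ ≤ ((min m N : ℕ) : ℝ) := by linarith
  rw [hLHS]
  calc ∑ i, σ i * c i ≤ ∑ i, σ i * d i :=
        Finset.sum_le_sum fun i _ => mul_le_mul_of_nonneg_left (hcd i) (hσ i)
    _ ≤ sumTop' σ m := sum_mul_le_sumTop σ hσ m d hd0 hd1 hdsum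

lemma keyLB (X : Matrix (Fin N) (Fin N) ℂ) (m : ℕ) :
    ∃ u v : Fin (min m N) → EuclideanSpace ℂ (Fin N),
      (∀ s t, s ≠ t → ⟪u s, u t⟫ = 0) ∧ (∀ t, ‖u t‖ ≤ 1) ∧
      (∀ s t, s ≠ t → ⟪v s, v t⟫ = 0) ∧ (∀ t, ‖v t‖ ≤ 1) ∧
      sumTop' (fun i => Real.sqrt (lam X i)) m = ∑ t, (⟪u t, mvL X (v t)⟫).re := by
  classical
  obtain ⟨s0, hcard, heq⟩ := sumTop_exists_eq (fun i => Real.sqrt (lam X i)) m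
  set e := s0.orderIsoOfFin hcard with hedef
  refine ⟨fun t => wv X (e t), fun t => eb X (e t), ?_, ?_, ?_, ?_, ?_⟩
  · intro a b hab
    exact inner_wv_ne X fun h => hab (e.injective (Subtype.ext h))
  · intro t; exact norm_wv_le X _
  · intro a b hab
    rw [orthonormal_iff_ite.1 (eb X).orthonormal]
    rw [if_neg fun h => hab (e.injective (Subtype.ext h))]
  · intro t; rw [(eb X).orthonormal.1]
  · rw [heq]
    have hterm : ∀ t : Fin (min m N),
        (⟪wv X (e t), mvL X (eb X (e t))⟫).re = Real.sqrt (lam X (e t)) := by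
      intro t
      rw [mvL_eb_eq, inner_smul_right, inner_wv]
      by_cases h : lam X ((e t) : Fin N) = 0
      · simp [h]
      · simp [h]
    rw [Finset.sum_congr rfl fun t _ => hterm t]
    exact ((Equiv.sum_comp e.toEquiv fun i : {x // x ∈ s0} => Real.sqrt (lam X i.1)).trans
      (Finset.sum_coe_sort s0 fun i => Real.sqrt (lam X i))).symm
-- additional matrix/inner lemmas for the averaging argument

lemma inner_mvL_addM (X Y : Matrix (Fin N) (Fin N) ℂ) (x y : EuclideanSpace ℂ (Fin N)) :
    ⟪y, mvL (X + Y) x⟫ = ⟪y, mvL X x⟫ + ⟪y, mvL Y x⟫ := by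
  simp only [inner_eq, mvL_apply, Matrix.add_apply, add_mul, Finset.sum_add_distrib, mul_add]

lemma inner_mvL_zeroM (x y : EuclideanSpace ℂ (Fin N)) : ⟪y, mvL 0 x⟫ = 0 := by
  rw [inner_eq]
  refine Finset.sum_eq_zero fun i _ => ?_
  rw [mvL_apply]
  simp

lemma inner_mvL_sumM {γ : Type*} (t : Finset γ) (X : γ → Matrix (Fin N) (Fin N) ℂ)
    (x y : EuclideanSpace ℂ (Fin N)) :
    ⟪y, mvL (∑ j ∈ t, X j) x⟫ = ∑ j ∈ t, ⟪y, mvL (X j) x⟫ := by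
  classical
  induction t using Finset.cons_induction with
  | empty => rw [Finset.sum_empty, Finset.sum_empty]; exact inner_mvL_zeroM x y
  | cons j t hj ih => rw [Finset.sum_cons, Finset.sum_cons, inner_mvL_addM, ih]

lemma inner_mvL_smulM (c : ℂ) (X : Matrix (Fin N) (Fin N) ℂ) (x y : EuclideanSpace ℂ (Fin N)) :
    ⟪y, mvL (c • X) x⟫ = c * ⟪y, mvL X x⟫ := by
  simp only [inner_eq, mvL_apply, Matrix.smul_apply, smul_eq_mul, Finset.mul_sum]
  refine Finset.sum_congr rfl fun i _ => ?_
  refine Finset.sum_congr rfl fun l _ => by ring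

-- unitary preservation for diagonal unimodular matrices
lemma inner_mvL_unitary (W : Matrix (Fin N) (Fin N) ℂ) (hW : Wᴴ * W = 1)
    (a b : EuclideanSpace ℂ (Fin N)) : ⟪mvL W a, mvL W b⟫ = ⟪a, b⟫ := by
  rw [inner_mvL', mvL_mvL, hW, mvL_one]

lemma norm_mvL_unitary (W : Matrix (Fin N) (Fin N) ℂ) (hW : Wᴴ * W = 1)
    (a : EuclideanSpace ℂ (Fin N)) : ‖mvL W a‖ = ‖a‖ := by
  have h := congrArg Complex.re (inner_mvL_unitary W hW a a)
  have h1 : RCLike.re ⟪mvL W a, mvL W a⟫ = ‖mvL W a‖ ^ 2 := inner_self_eq_norm_sq _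
  have h2 : RCLike.re ⟪a, a⟫ = ‖a‖ ^ 2 := inner_self_eq_norm_sq _
  have h3 : ‖mvL W a‖ ^ 2 = ‖a‖ ^ 2 := by rw [← h1, ← h2]; exact h
  calc ‖mvL W a‖ = Real.sqrt (‖mvL W a‖ ^ 2) := (Real.sqrt_sq (norm_nonneg _)).symm
    _ = Real.sqrt (‖a‖ ^ 2) := by rw [h3]
    _ = ‖a‖ := Real.sqrt_sq (norm_nonneg _)

lemma conj_exp_unit (M : ℕ) (a : ℤ) :
    (starRingEnd ℂ) (Complex.exp (2 * Real.pi * Complex.I * a / M)) *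
      Complex.exp (2 * Real.pi * Complex.I * a / M) = 1 := by
  rw [← Complex.exp_conj, ← Complex.exp_add]
  have : (starRingEnd ℂ) (2 * Real.pi * Complex.I * a / M) = -(2 * Real.pi * Complex.I * a / M) := by
    simp only [map_div₀, _root_.map_mul, Complex.conj_I, Complex.conj_ofReal, map_ofNat,
      map_intCast, map_natCast]
    ring
  rw [this, neg_add_cancel, Complex.exp_zero]

lemma exp_unit_diag_unitary (M : ℕ) (f : Fin N → ℤ) :
    (Matrix.diagonal fun i => Complex.exp (2 * Real.pi * Complex.I * (f i) / M))ᴴ *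
      (Matrix.diagonal fun i => Complex.exp (2 * Real.pi * Complex.I * (f i) / M)) = 1 := by
  ext i j
  rw [Matrix.diagonal_conjTranspose, Matrix.diagonal_mul_diagonal,
    Matrix.diagonal_apply, Matrix.one_apply]
  by_cases h : i = j
  · subst h
    rw [if_pos rfl, if_pos rfl]
    exact conj_exp_unit M (f i)
  · rw [if_neg h, if_neg h]

-- the geometric sum / averaging identity
lemma avg_exp (M : ℕ) (hM : 0 < M) (d : ℤ) (hd : d.natAbs < M) :
    ∑ j ∈ Finset.range M, Complex.exp (2 * Real.pi * Complex.I * (j * d) / M)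
      = if d = 0 then (M : ℂ) else 0 := by
  by_cases h : d = 0
  · simp [h]
  · rw [if_neg h]
    have hM0 : (M : ℂ) ≠ 0 := Nat.cast_ne_zero.2 hM.ne'
    have hπ : (Real.pi : ℂ) ≠ 0 := by exact_mod_cast Real.pi_ne_zero
    have hI := Complex.I_ne_zero
    set z := Complex.exp (2 * Real.pi * Complex.I * d / M) with hzdef
    have hform : ∀ j : ℕ, j ∈ Finset.range M →
        Complex.exp (2 * Real.pi * Complex.I * (j * d) / M) = z ^ j := by
      intro j _
      rw [hzdef, ← Complex.exp_nat_mul]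
      congr 1
      ring
    have hz1 : z ≠ 1 := by
      intro hz
      rw [hzdef, Complex.exp_eq_one_iff] at hz
      obtain ⟨n, hn⟩ := hz
      have hcancel : (2 * (Real.pi : ℂ) * Complex.I) * (d : ℂ)
          = (2 * (Real.pi : ℂ) * Complex.I) * ((n : ℂ) * M) := by
        field_simp at hn
        linear_combination (2 * (Real.pi : ℂ) * Complex.I) * hn
      have h2πI : (2 * (Real.pi : ℂ) * Complex.I) ≠ 0 :=
        mul_ne_zero (mul_ne_zero two_ne_zero hπ) hI
      have hd' : (d : ℂ) = (n : ℂ) * M := mul_left_cancel₀ h2πI hcancel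
      have hdint : d = n * M := by exact_mod_cast hd'
      have hn0 : n ≠ 0 := by rintro rfl; simp at hdint; exact h hdint
      have hnat : d.natAbs = n.natAbs * M := by
        rw [hdint, Int.natAbs_mul, Int.natAbs_natCast]
      have hn1 : 1 ≤ n.natAbs := Int.natAbs_pos.2 hn0
      have : M ≤ d.natAbs := by rw [hnat]; nlinarith
      omega
    rw [Finset.sum_congr rfl hform, geom_sum_eq hz1]
    have hzM : z ^ M = 1 := by
      rw [hzdef, ← Complex.exp_nat_mul]
      have harg : (M : ℂ) * (2 * Real.pi * Complex.I * d / M) = d * (2 * Real.pi * Complex.I) := by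
        field_simp
      rw [harg, Complex.exp_int_mul_two_pi_mul_I]
    rw [hzM, sub_self, zero_div]

lemma D_entries (A : Matrix (Fin N) (Fin N) ℂ) (p q : Fin N → ℤ) (k : ℤ)
    (s : Finset ℤ) (hs : ∀ i, q i ∈ s) (i l : Fin N) :
    (∑ n ∈ s, Matrix.diagonal (fun j => if q j = n then (1:ℂ) else 0) * A *
      Matrix.diagonal (fun j => if p j = n + k then (1:ℂ) else 0)) i l
      = if p l = q i + k then A i l else 0 := by
  rw [Matrix.sum_apply]
  rw [Finset.sum_eq_single (q i)]
  · rw [Matrix.mul_diagonal, Matrix.diagonal_mul, if_pos rfl, one_mul, mul_ite, mul_one, mul_zero]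
  · intro n _ hn
    rw [Matrix.mul_diagonal, Matrix.diagonal_mul, if_neg (fun h => hn h.symm), zero_mul, zero_mul]
  · intro h
    exact absurd (hs i) h

end GenDiag


/-- Generalized diagonal theorem for finite matrices: for two partitions of `Fin N` into
blocks indexed by `ℤ` (encoded by `p, q : Fin N → ℤ`, with block projections
`P n = blockProj p n`, `Q n = blockProj q n`; only finitely many are nonzero), the
generalized diagonal `D = ∑ n, Q n * A * P (n + k)` (a finite sum, taken over any finite set
of indices containing all blocks of `q`) has singular values submajorized by those of `A`. -/
theorem stmt_13 {N : ℕ} (A : Matrix (Fin N) (Fin N) ℂ) (p q : Fin N → ℤ) (k : ℤ)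
    (s : Finset ℤ) (hs : ∀ i, q i ∈ s)
    (D : Matrix (Fin N) (Fin N) ℂ)
    (hD : D = ∑ n ∈ s, blockProj q n * A * blockProj p (n + k)) :
    ∀ m : ℕ, sumTop (singVals D) m ≤ sumTop (singVals A) m := by
  classical
  intro m
  set M : ℕ := ((Finset.univ ×ˢ Finset.univ : Finset (Fin N × Fin N)).sup
    (fun il => (p il.2 - k - q il.1).natAbs)) + 1 with hMdef
  have hM0 : 0 < M := Nat.succ_pos _
  have hMne : (M : ℂ) ≠ 0 := Nat.cast_ne_zero.2 hM0.ne'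
  have hMd : ∀ i l : Fin N, (p l - k - q i).natAbs < M := by
    intro i l
    have h1 : (p l - k - q i).natAbs ≤ ((Finset.univ ×ˢ Finset.univ : Finset (Fin N × Fin N)).sup
        (fun il => (p il.2 - k - q il.1).natAbs)) :=
      Finset.le_sup (f := fun il : Fin N × Fin N => (p il.2 - k - q il.1).natAbs)
        (b := (i, l)) (Finset.mem_product.2 ⟨Finset.mem_univ i, Finset.mem_univ l⟩)
    omega
  set U : ℕ → Matrix (Fin N) (Fin N) ℂ := fun j =>
    Matrix.diagonal (fun i => Complex.exp (2 * Real.pi * Complex.I * (((j : ℤ) * q i : ℤ) : ℂ) / M))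
    with hUdef
  set V : ℕ → Matrix (Fin N) (Fin N) ℂ := fun j =>
    Matrix.diagonal (fun i =>
      Complex.exp (2 * Real.pi * Complex.I * (((j : ℤ) * (p i - k) : ℤ) : ℂ) / M)) with hVdef
  have hDe : ∀ i l, D i l = if p l = q i + k then A i l else 0 := by
    intro i l
    rw [hD]
    exact GenDiag.D_entries A p q k s hs i l
  have havg : ∀ i l, (∑ j ∈ Finset.range M, (U j)ᴴ * A * V j) i l
      = (if p l = q i + k then (M : ℂ) else 0) * A i l := by
    intro i l
    rw [Matrix.sum_apply]
    have hterm : ∀ j ∈ Finset.range M, ((U j)ᴴ * A * V j) i l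
        = Complex.exp (2 * Real.pi * Complex.I * ((j : ℂ) * ((p l - k - q i : ℤ) : ℂ)) / M)
          * A i l := by
      intro j _
      simp only [hUdef, hVdef]
      rw [Matrix.diagonal_conjTranspose, Matrix.mul_diagonal, Matrix.diagonal_mul]
      have hstar : star (Complex.exp (2 * Real.pi * Complex.I * (((j : ℤ) * q i : ℤ) : ℂ) / M))
          = Complex.exp (-(2 * Real.pi * Complex.I * (((j : ℤ) * q i : ℤ) : ℂ) / M)) := by
        rw [Complex.star_def, ← Complex.exp_conj]
        congr 1
        simp only [map_div₀, _root_.map_mul, map_ofNat, Complex.conj_I, Complex.conj_ofReal,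
          map_intCast, map_natCast]
        ring
      rw [Pi.star_apply, hstar, mul_right_comm, ← Complex.exp_add]
      congr 2
      push_cast
      field_simp
      ring
    rw [Finset.sum_congr rfl hterm, ← Finset.sum_mul,
      GenDiag.avg_exp M hM0 (p l - k - q i) (hMd i l)]
    by_cases h : p l - k - q i = 0
    · rw [if_pos h, if_pos (by omega)]
    · rw [if_neg h, if_neg (by omega)]
  have hDavg : D = (M : ℂ)⁻¹ • ∑ j ∈ Finset.range M, (U j)ᴴ * A * V j := by
    ext i l
    rw [Matrix.smul_apply, havg i l, hDe i l, smul_eq_mul]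
    by_cases h : p l = q i + k
    · rw [if_pos h, if_pos h, ← mul_assoc, inv_mul_cancel₀ hMne, one_mul]
    · rw [if_neg h, if_neg h, zero_mul, mul_zero]
  have hunitU : ∀ j : ℕ, (U j)ᴴ * U j = 1 := fun j => by
    simp only [hUdef]
    exact GenDiag.exp_unit_diag_unitary M (fun i => (j : ℤ) * q i)
  have hunitV : ∀ j : ℕ, (V j)ᴴ * V j = 1 := fun j => by
    simp only [hVdef]
    exact GenDiag.exp_unit_diag_unitary M (fun i => (j : ℤ) * (p i - k))
  obtain ⟨u, v, hou, hnu, hov, hnv, heq⟩ := GenDiag.keyLB D m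
  have hS : sumTop (singVals D) m
      = ∑ t, (@inner ℂ _ _ (u t) (GenDiag.mvL D (v t))).re := heq
  have hswap : ∀ (j : ℕ) (t : Fin (min m N)),
      @inner ℂ _ _ (u t) (GenDiag.mvL ((U j)ᴴ * A * V j) (v t))
        = @inner ℂ _ _ (GenDiag.mvL (U j) (u t))
            (GenDiag.mvL A (GenDiag.mvL (V j) (v t))) := by
    intro j t
    conv_rhs => rw [GenDiag.inner_mvL' (U j), GenDiag.mvL_mvL, GenDiag.mvL_mvL]
  rw [hS]
  have hcast : ((M : ℂ))⁻¹ = (((M : ℝ)⁻¹ : ℝ) : ℂ) := by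
    push_cast
    ring
  calc ∑ t, (@inner ℂ _ _ (u t) (GenDiag.mvL D (v t))).re
      = ∑ t, (M : ℝ)⁻¹ * ∑ j ∈ Finset.range M,
          (@inner ℂ _ _ (GenDiag.mvL (U j) (u t))
            (GenDiag.mvL A (GenDiag.mvL (V j) (v t)))).re := by
        refine Finset.sum_congr rfl fun t _ => ?_
        rw [hDavg, GenDiag.inner_mvL_smulM, GenDiag.inner_mvL_sumM, hcast,
          Complex.re_ofReal_mul, Complex.re_sum]
        congr 1
        exact Finset.sum_congr rfl fun j _ => by rw [hswap j t]
    _ = (M : ℝ)⁻¹ * ∑ j ∈ Finset.range M, ∑ t,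
          (@inner ℂ _ _ (GenDiag.mvL (U j) (u t))
            (GenDiag.mvL A (GenDiag.mvL (V j) (v t)))).re := by
        rw [← Finset.mul_sum, Finset.sum_comm]
    _ ≤ (M : ℝ)⁻¹ * ∑ _j ∈ Finset.range M, sumTop (singVals A) m := by
        refine mul_le_mul_of_nonneg_left (Finset.sum_le_sum fun j _ => ?_) (by positivity)
        refine GenDiag.keyUB A m (fun t => GenDiag.mvL (U j) (u t))
          (fun t => GenDiag.mvL (V j) (v t)) ?_ ?_ ?_ ?_
        · intro a b hab
          rw [GenDiag.inner_mvL_unitary (U j) (hunitU j)]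
          exact hou a b hab
        · intro t
          rw [GenDiag.norm_mvL_unitary (U j) (hunitU j)]
          exact hnu t
        · intro a b hab
          rw [GenDiag.inner_mvL_unitary (V j) (hunitV j)]
          exact hov a b hab
        · intro t
          rw [GenDiag.norm_mvL_unitary (V j) (hunitV j)]
          exact hnv t
    _ = sumTop (singVals A) m := by
        rw [Finset.sum_const, Finset.card_range, nsmul_eq_mul, ← mul_assoc,
          inv_mul_cancel₀ (by exact_mod_cast hM0.ne' : (M : ℝ) ≠ 0), one_mul]
end
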